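/- arXiv:2102.01036 — 7 statements merged into one kernel-verified Lean document; each statement's English description precedes it below -/
import Mathlib

section
/- Let n ≥ 3 be an integer and let q be a real number with 4q > n − 1. Then there exists a constant C > 0 such that for every L ≥ 1, ∫₀^∞ e^{nL} ((cosh L + e^L ρ²/2)² − 1)^{−q} ρ^{n−2} dρ ≤ C e^{L(n−2q)}. In particular, for 2q > n this bound tends to 0 as L → ∞. -/
open MeasureTheory Real Filter

lemma aux_integrable {p : ℝ} (hp : p < -1) :
    IntegrableOn (fun ρ : ℝ => (1 + ρ) ^ p) (Set.Ioi 0) := by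
  have hunion : Set.Ioc (0:ℝ) 1 ∪ Set.Ioi 1 = Set.Ioi 0 :=
    Set.Ioc_union_Ioi_eq_Ioi zero_le_one
  rw [← hunion]
  apply IntegrableOn.union
  · have hcont : ContinuousOn (fun ρ : ℝ => (1 + ρ) ^ p) (Set.Icc 0 1) := by
      apply ContinuousOn.rpow_const (by fun_prop)
      intro x hx
      left
      have := hx.1
      positivity
    exact (hcont.integrableOn_compact isCompact_Icc).mono_set Set.Ioc_subset_Icc_self
  · have hbase : IntegrableOn (fun ρ : ℝ => ρ ^ p) (Set.Ioi 1) :=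
      integrableOn_Ioi_rpow_of_lt hp one_pos
    apply hbase.mono' ((Measurable.aestronglyMeasurable (by fun_prop)))
    filter_upwards [ae_restrict_mem measurableSet_Ioi] with x hx
    have hx1 : (1:ℝ) < x := hx
    rw [Real.norm_eq_abs, abs_of_nonneg (Real.rpow_nonneg (by linarith) _)]
    exact Real.rpow_le_rpow_of_nonpos (by linarith) (by linarith) (by linarith)

lemma aux_key {L ρ : ℝ} (hL : 1 ≤ L) (hρ : 0 ≤ ρ) :
    (1 - 4 / Real.exp 1 ^ 2) / 16 * Real.exp (2 * L) * (1 + ρ) ^ 4 ≤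
      (Real.cosh L + Real.exp L * ρ ^ 2 / 2) ^ 2 - 1 := by
  have he : (2:ℝ) < Real.exp 1 := by
    have := Real.exp_one_gt_d9; linarith
  have hE : Real.exp 1 ≤ Real.exp L := Real.exp_le_exp.2 hL
  have hEpos : (0:ℝ) < Real.exp L := Real.exp_pos L
  have hcosh : Real.exp L / 2 ≤ Real.cosh L := by
    rw [Real.cosh_eq]
    have := (Real.exp_pos (-L)).le
    linarith
  have h2L : Real.exp (2 * L) = Real.exp L * Real.exp L := by
    rw [two_mul, Real.exp_add]
  set A := Real.cosh L + Real.exp L * ρ ^ 2 / 2 with hA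
  clear_value A
  have hA1 : Real.exp L / 2 * (1 + ρ ^ 2) ≤ A := by
    rw [hA]; nlinarith [sq_nonneg ρ]
  have hAe : Real.exp 1 / 2 ≤ A := by nlinarith [sq_nonneg ρ]
  have hApos : (0:ℝ) < A := lt_of_lt_of_le (by linarith) hAe
  have he2 : (0:ℝ) < Real.exp 1 ^ 2 := by positivity
  have h1le : (1:ℝ) ≤ 4 / Real.exp 1 ^ 2 * A ^ 2 := by
    have hAA : Real.exp 1 / 2 * (Real.exp 1 / 2) ≤ A * A :=
      mul_le_mul hAe hAe (by linarith) hApos.le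
    rw [div_mul_eq_mul_div, le_div_iff₀ he2, one_mul, sq]
    nlinarith [hAA]
  have hsq : (1 + ρ) ^ 2 ≤ 2 * (1 + ρ ^ 2) := by nlinarith [sq_nonneg (1 - ρ)]
  have hA2 : Real.exp (2 * L) / 16 * (1 + ρ) ^ 4 ≤ A ^ 2 := by
    have h4 : (1 + ρ) ^ 4 ≤ 4 * (1 + ρ ^ 2) ^ 2 := by nlinarith [sq_nonneg ((1+ρ)^2), sq_nonneg (1 + ρ^2), pow_le_pow_left₀ (by positivity) hsq 2]
    have hAsq : (Real.exp L / 2 * (1 + ρ ^ 2)) ^ 2 ≤ A ^ 2 := by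
      apply pow_le_pow_left₀ (by positivity) hA1
    rw [h2L]
    nlinarith [sq_nonneg (1 + ρ^2), hEpos.le]
  have hc1 : 0 < 1 - 4 / Real.exp 1 ^ 2 := by
    rw [sub_pos, div_lt_one he2]; nlinarith
  -- A^2 - 1 ≥ (1 - 4/e²) A²
  have hmain : (1 - 4 / Real.exp 1 ^ 2) * A ^ 2 ≤ A ^ 2 - 1 := by nlinarith
  calc (1 - 4 / Real.exp 1 ^ 2) / 16 * Real.exp (2 * L) * (1 + ρ) ^ 4
      = (1 - 4 / Real.exp 1 ^ 2) * (Real.exp (2 * L) / 16 * (1 + ρ) ^ 4) := by ring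
    _ ≤ (1 - 4 / Real.exp 1 ^ 2) * A ^ 2 := by
        apply mul_le_mul_of_nonneg_left hA2 hc1.le
    _ ≤ A ^ 2 - 1 := hmain

/-- Top-face estimate `F₊,L`: for `n ≥ 3` and `4q > n − 1`, there is `C > 0` with
`∫₀^∞ e^{nL} ((cosh L + e^L ρ²/2)² − 1)^{−q} ρ^{n−2} dρ ≤ C e^{L(n−2q)}` for all `L ≥ 1`;
and for `2q > n` this bound tends to `0` as `L → ∞`. -/
theorem stmt_0 (n : ℕ) (hn : 3 ≤ n) (q : ℝ) (hq : 4 * q > (n : ℝ) - 1) :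
    (∃ C : ℝ, 0 < C ∧ ∀ L : ℝ, 1 ≤ L →
      (∫ ρ in Set.Ioi (0 : ℝ),
          Real.exp ((n : ℝ) * L) *
            ((Real.cosh L + Real.exp L * ρ ^ 2 / 2) ^ 2 - 1) ^ (-q) * ρ ^ (n - 2))
        ≤ C * Real.exp (L * ((n : ℝ) - 2 * q))) ∧
    (2 * q > (n : ℝ) → ∀ C : ℝ,
      Tendsto (fun L : ℝ => C * Real.exp (L * ((n : ℝ) - 2 * q))) atTop (nhds 0)) := by
  have hn3 : (3:ℝ) ≤ (n:ℝ) := by exact_mod_cast hn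
  have hqpos : 0 < q := by linarith
  set K : ℝ := (1 - 4 / Real.exp 1 ^ 2) / 16 with hK
  have hKpos : 0 < K := by
    have he : (2:ℝ) < Real.exp 1 := by have := Real.exp_one_gt_d9; linarith
    have he2 : (0:ℝ) < Real.exp 1 ^ 2 := by positivity
    have : 4 / Real.exp 1 ^ 2 < 1 := by rw [div_lt_one he2]; nlinarith
    rw [hK]; linarith
  set p : ℝ := ((n:ℝ) - 2) - 4 * q with hp
  have hplt : p < -1 := by rw [hp]; linarith
  have hint : IntegrableOn (fun ρ : ℝ => (1 + ρ) ^ p) (Set.Ioi 0) := aux_integrable hplt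
  set I : ℝ := ∫ ρ in Set.Ioi (0:ℝ), (1 + ρ) ^ p with hI
  have hInonneg : 0 ≤ I := by
    apply setIntegral_nonneg measurableSet_Ioi
    intro x hx
    have hx0 : (0:ℝ) < x := hx
    exact Real.rpow_nonneg (by linarith) _
  constructor
  · refine ⟨K ^ (-q) * (I + 1),
      mul_pos (Real.rpow_pos_of_pos hKpos _) (by linarith), fun L hL => ?_⟩
    have hELpos : (0:ℝ) < Real.exp (L * ((n:ℝ) - 2 * q)) := Real.exp_pos _
    have hbound : ∀ ρ ∈ Set.Ioi (0:ℝ),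
        Real.exp ((n : ℝ) * L) *
            ((Real.cosh L + Real.exp L * ρ ^ 2 / 2) ^ 2 - 1) ^ (-q) * ρ ^ (n - 2)
          ≤ K ^ (-q) * Real.exp (L * ((n:ℝ) - 2 * q)) * (1 + ρ) ^ p := by
      intro ρ hρ
      have hρ0 : (0:ℝ) < ρ := hρ
      have hkey := aux_key hL hρ0.le
      have h1ρ : (0:ℝ) < 1 + ρ := by linarith
      have hKE : (0:ℝ) < K * Real.exp (2 * L) * (1 + ρ) ^ 4 := by positivity
      have hrpow : ((Real.cosh L + Real.exp L * ρ ^ 2 / 2) ^ 2 - 1) ^ (-q)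
          ≤ (K * Real.exp (2 * L) * (1 + ρ) ^ 4) ^ (-q) :=
        Real.rpow_le_rpow_of_nonpos hKE hkey (by linarith)
      have hsplit : (K * Real.exp (2 * L) * (1 + ρ) ^ 4) ^ (-q)
          = K ^ (-q) * Real.exp (2 * L) ^ (-q) * ((1 + ρ) ^ 4 : ℝ) ^ (-q) := by
        rw [Real.mul_rpow (by positivity) (by positivity),
            Real.mul_rpow (by positivity) (by positivity)]
      have hexp : Real.exp (2 * L) ^ (-q) = Real.exp (2 * L * (-q)) :=
        (Real.exp_mul (2 * L) (-q)).symm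
      have hpow4 : ((1 + ρ) ^ 4 : ℝ) ^ (-q) = (1 + ρ) ^ ((4:ℝ) * (-q)) := by
        rw [← Real.rpow_natCast (1 + ρ) 4, ← Real.rpow_mul h1ρ.le]
        norm_num
      have hρpow : ρ ^ (n - 2) ≤ (1 + ρ) ^ (n - 2) :=
        pow_le_pow_left₀ hρ0.le (by linarith) _
      have hnat : ((1 + ρ) : ℝ) ^ (n - 2) = (1 + ρ) ^ (((n:ℝ) - 2)) := by
        rw [← Real.rpow_natCast (1 + ρ) (n - 2)]
        congr 1
        rw [Nat.cast_sub (by omega)]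
        norm_num
      calc Real.exp ((n : ℝ) * L) *
            ((Real.cosh L + Real.exp L * ρ ^ 2 / 2) ^ 2 - 1) ^ (-q) * ρ ^ (n - 2)
          ≤ Real.exp ((n : ℝ) * L) *
            (K * Real.exp (2 * L) * (1 + ρ) ^ 4) ^ (-q) * (1 + ρ) ^ (n - 2) := by
            apply mul_le_mul
            · exact mul_le_mul_of_nonneg_left hrpow (Real.exp_pos _).le
            · exact hρpow
            · positivity
            · positivity
        _ = K ^ (-q) * Real.exp (L * ((n:ℝ) - 2 * q)) * (1 + ρ) ^ p := by
            rw [hsplit, hexp, hpow4, hnat]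
            have estep : Real.exp ((n:ℝ) * L) *
                (K ^ (-q) * Real.exp (2 * L * (-q)) * (1 + ρ) ^ ((4:ℝ) * (-q))) *
                (1 + ρ) ^ ((n:ℝ) - 2)
                = K ^ (-q) * (Real.exp ((n:ℝ) * L) * Real.exp (2 * L * (-q))) *
                  ((1 + ρ) ^ ((4:ℝ) * (-q)) * (1 + ρ) ^ ((n:ℝ) - 2)) := by ring
            rw [estep, ← Real.exp_add, ← Real.rpow_add h1ρ,
              show (n:ℝ) * L + 2 * L * (-q) = L * ((n:ℝ) - 2 * q) from by ring,
              show (4:ℝ) * (-q) + ((n:ℝ) - 2) = p from by rw [hp]; ring]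
    have hgint : IntegrableOn
        (fun ρ : ℝ => K ^ (-q) * Real.exp (L * ((n:ℝ) - 2 * q)) * (1 + ρ) ^ p)
        (Set.Ioi 0) := hint.const_mul _
    have hmono : (∫ ρ in Set.Ioi (0 : ℝ),
          Real.exp ((n : ℝ) * L) *
            ((Real.cosh L + Real.exp L * ρ ^ 2 / 2) ^ 2 - 1) ^ (-q) * ρ ^ (n - 2))
        ≤ ∫ ρ in Set.Ioi (0:ℝ),
            K ^ (-q) * Real.exp (L * ((n:ℝ) - 2 * q)) * (1 + ρ) ^ p := by
      apply integral_mono_of_nonneg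
      · filter_upwards [ae_restrict_mem measurableSet_Ioi] with x hx
        have hx0 : (0:ℝ) < x := hx
        have hkey := aux_key hL hx0.le
        have hK0 : (0:ℝ) < (1 - 4 / Real.exp 1 ^ 2) / 16 := hKpos
        have hbase : (0:ℝ) < (Real.cosh L + Real.exp L * x ^ 2 / 2) ^ 2 - 1 := by
          have h0 : (0:ℝ) < (1 - 4 / Real.exp 1 ^ 2) / 16 * Real.exp (2*L) * (1+x)^4 :=
            mul_pos (mul_pos hK0 (Real.exp_pos _)) (by positivity)
          linarith
        positivity
      · exact hgint
      · filter_upwards [ae_restrict_mem measurableSet_Ioi] with x hx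
        exact hbound x hx
    have hgval : (∫ ρ in Set.Ioi (0:ℝ),
          K ^ (-q) * Real.exp (L * ((n:ℝ) - 2 * q)) * (1 + ρ) ^ p)
        = K ^ (-q) * Real.exp (L * ((n:ℝ) - 2 * q)) * I := by
      rw [hI, ← integral_const_mul]
    have hKq : (0:ℝ) < K ^ (-q) := Real.rpow_pos_of_pos hKpos _
    calc (∫ ρ in Set.Ioi (0 : ℝ),
          Real.exp ((n : ℝ) * L) *
            ((Real.cosh L + Real.exp L * ρ ^ 2 / 2) ^ 2 - 1) ^ (-q) * ρ ^ (n - 2))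
        ≤ K ^ (-q) * Real.exp (L * ((n:ℝ) - 2 * q)) * I := by rw [← hgval]; exact hmono
      _ ≤ K ^ (-q) * (I + 1) * Real.exp (L * ((n:ℝ) - 2 * q)) := by
          nlinarith [mul_pos (Real.rpow_pos_of_pos hKpos (-q)) hELpos]
  · intro h2q C
    have hneg : (n:ℝ) - 2 * q < 0 := by linarith
    have h1 : Tendsto (fun L : ℝ => L * ((n:ℝ) - 2 * q)) atTop atBot :=
      tendsto_id.atTop_mul_const_of_neg hneg
    have h2 : Tendsto (fun L : ℝ => Real.exp (L * ((n:ℝ) - 2 * q))) atTop (nhds 0) :=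
      Real.tendsto_exp_atBot.comp h1
    simpa using h2.const_mul C
end

section
/- Let n ≥ 3 be an integer and let q be a real number with 2q > n − 1. Then there exists a constant C > 0 such that for every L ≥ 1, ∫₀^∞ e^{−nL} ((cosh L + e^{−L} ρ²/2)² − 1)^{−q/2} ρ^{n−2} dρ ≤ C e^{−L(1+q)}. In particular this bound tends to 0 as L → ∞. -/
open MeasureTheory Real Filter

set_option maxHeartbeats 1000000

private lemma aux_f_integrable (n : ℕ) (hn : 3 ≤ n) (q : ℝ) (hq : 2 * q > (n : ℝ) - 1) :
    IntegrableOn (fun t : ℝ => (1 + t ^ 4) ^ (-q / 2) * t ^ (n - 2)) (Set.Ioi (0 : ℝ)) := by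
  have hcont : Continuous (fun t : ℝ => (1 + t ^ 4) ^ (-q / 2) * t ^ (n - 2)) := by
    refine Continuous.mul ?_ (continuous_pow _)
    refine Continuous.rpow_const (by continuity) fun t => Or.inl ?_
    positivity
  have h01 : IntegrableOn (fun t : ℝ => (1 + t ^ 4) ^ (-q / 2) * t ^ (n - 2))
      (Set.Ioc (0 : ℝ) 1) := hcont.integrableOn_Ioc
  have h1 : IntegrableOn (fun t : ℝ => (1 + t ^ 4) ^ (-q / 2) * t ^ (n - 2))
      (Set.Ioi (1 : ℝ)) := by
    have hbig : IntegrableOn (fun t : ℝ => t ^ ((n : ℝ) - 2 - 2 * q)) (Set.Ioi (1 : ℝ)) :=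
      integrableOn_Ioi_rpow_of_lt (by linarith) one_pos
    refine hbig.mono' hcont.aestronglyMeasurable.restrict ?_
    filter_upwards [ae_restrict_mem measurableSet_Ioi] with t ht
    have ht1 : (1 : ℝ) < t := ht
    have ht0 : (0 : ℝ) < t := lt_trans one_pos ht1
    rw [Real.norm_eq_abs, abs_of_nonneg (by positivity)]
    have hb : (1 + t ^ 4) ^ (-q / 2) ≤ (t ^ 4) ^ (-q / 2) := by
      refine Real.rpow_le_rpow_of_nonpos (by positivity) (by linarith) ?_
      have hq1 : (1 : ℝ) < q := by
        have hn3 : (3 : ℝ) ≤ (n : ℝ) := by exact_mod_cast hn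
        linarith
      linarith
    calc (1 + t ^ 4) ^ (-q / 2) * t ^ (n - 2) ≤ (t ^ 4) ^ (-q / 2) * t ^ (n - 2) :=
          mul_le_mul_of_nonneg_right hb (by positivity)
      _ = t ^ ((n : ℝ) - 2 - 2 * q) := by
          rw [← Real.rpow_natCast t 4, ← Real.rpow_natCast t (n - 2),
            ← Real.rpow_mul ht0.le, ← Real.rpow_add ht0]
          congr 1
          have hcast : ((n - 2 : ℕ) : ℝ) = (n : ℝ) - 2 := by
            rw [Nat.cast_sub (by omega)]; norm_num
          rw [hcast]
          push_cast
          ring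
  rw [← Set.Ioc_union_Ioi_eq_Ioi (zero_le_one : (0:ℝ) ≤ 1)]
  exact h01.union h1

/-- Bottom-face estimate `F₋,L`: for `n ≥ 3` and `2q > n − 1`, there is `C > 0` with
`∫₀^∞ e^{−nL} ((cosh L + e^{−L} ρ²/2)² − 1)^{−q/2} ρ^{n−2} dρ ≤ C e^{−L(1+q)}` for all
`L ≥ 1`; and this bound tends to `0` as `L → ∞`. -/
theorem stmt_1 (n : ℕ) (hn : 3 ≤ n) (q : ℝ) (hq : 2 * q > (n : ℝ) - 1) :
    (∃ C : ℝ, 0 < C ∧ ∀ L : ℝ, 1 ≤ L →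
      (∫ ρ in Set.Ioi (0 : ℝ),
          Real.exp (-((n : ℝ) * L)) *
            ((Real.cosh L + Real.exp (-L) * ρ ^ 2 / 2) ^ 2 - 1) ^ (-q / 2) * ρ ^ (n - 2))
        ≤ C * Real.exp (-(L * (1 + q)))) ∧
    (∀ C : ℝ,
      Tendsto (fun L : ℝ => C * Real.exp (-(L * (1 + q)))) atTop (nhds 0)) := by
  have hq1 : (1 : ℝ) < q := by
    have hn3 : (3 : ℝ) ≤ (n : ℝ) := by exact_mod_cast hn
    linarith
  set f : ℝ → ℝ := fun t => (1 + t ^ 4) ^ (-q / 2) * t ^ (n - 2) with hf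
  have hI : IntegrableOn f (Set.Ioi (0 : ℝ)) := aux_f_integrable n hn q hq
  set I : ℝ := ∫ t in Set.Ioi (0 : ℝ), f t with hIdef
  have hI0 : 0 ≤ I := setIntegral_nonneg measurableSet_Ioi (fun t ht => by
    have : (0:ℝ) < t := ht
    simp only [hf]
    positivity)
  constructor
  · refine ⟨(8 : ℝ) ^ (q / 2) * I + 1, by positivity, ?_⟩
    intro L hL
    have hu2 : (2 : ℝ) ≤ Real.exp L := by
      have h1 : Real.exp 1 ≤ Real.exp L := Real.exp_le_exp.mpr hL
      have h2 := Real.exp_one_gt_d9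
      linarith
    set u : ℝ := Real.exp L with hu
    set v : ℝ := Real.exp (-L) with hv
    have hv0 : (0 : ℝ) < v := Real.exp_pos _
    have hu0 : (0 : ℝ) < u := Real.exp_pos _
    have huv : u * v = 1 := by rw [hu, hv, ← Real.exp_add]; simp
    have huv2 : u ^ 2 * v ^ 2 = 1 := by
      rw [show u ^ 2 * v ^ 2 = (u * v) ^ 2 by ring, huv, one_pow]
    have huv4 : u ^ 2 * v ^ 4 = v ^ 2 := by
      rw [show u ^ 2 * v ^ 4 = (u ^ 2 * v ^ 2) * v ^ 2 by ring, huv2, one_mul]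
    have hch : Real.cosh L = (u + v) / 2 := Real.cosh_eq L
    set K : ℝ := (8 : ℝ) ^ (q / 2) * Real.exp (-(L * (2 + q))) with hK
    -- positivity of the base
    have hbase : ∀ ρ : ℝ, 0 < (Real.cosh L + v * ρ ^ 2 / 2) ^ 2 - 1 := by
      intro ρ
      rw [hch]
      nlinarith [mul_nonneg hv0.le (sq_nonneg ρ), hv0, hu2, sq_nonneg (v * ρ ^ 2)]
    -- pointwise key estimate
    have hcast : ((n - 2 : ℕ) : ℝ) = (n : ℝ) - 2 := by
      rw [Nat.cast_sub (by omega)]; norm_num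
    have hun : u ^ (n - 2) = Real.exp (((n : ℝ) - 2) * L) := by
      rw [hu, ← Real.rpow_natCast (Real.exp L) (n - 2), ← Real.exp_mul]
      congr 1
      rw [hcast]
      ring
    have hupow : u ^ 2 = Real.exp (2 * L) := by rw [hu, sq, ← Real.exp_add]; ring_nf
    have hu2q : (u ^ 2) ^ (-q / 2) = Real.exp (-(q * L)) := by
      rw [hupow, ← Real.exp_mul]
      congr 1
      ring
    have h8 : (8 : ℝ) ^ (-q / 2) = ((8 : ℝ) ^ (q / 2))⁻¹ := by
      rw [neg_div, Real.rpow_neg (by norm_num : (0 : ℝ) ≤ 8)]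
    have key : ∀ ρ ∈ Set.Ioi (0 : ℝ),
        Real.exp (-((n : ℝ) * L)) *
            ((Real.cosh L + v * ρ ^ 2 / 2) ^ 2 - 1) ^ (-q / 2) * ρ ^ (n - 2)
          ≤ K * f (v * ρ) := by
      intro ρ hρ
      have hρ0 : (0 : ℝ) < ρ := hρ
      have hM0 : (0 : ℝ) < u ^ 2 / 8 * (1 + (v * ρ) ^ 4) := by positivity
      have hM : u ^ 2 / 8 * (1 + (v * ρ) ^ 4) ≤ (Real.cosh L + v * ρ ^ 2 / 2) ^ 2 - 1 := by
        rw [hch]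
        nlinarith [huv, huv2, huv4, sq_nonneg ρ, hv0, hu2, hρ0,
          mul_nonneg (sq_nonneg v) (sq_nonneg ρ),
          mul_nonneg (sq_nonneg v) (sq_nonneg (ρ^2)),
          mul_nonneg (mul_nonneg (sq_nonneg v) (sq_nonneg ρ)) (sq_nonneg ρ)]
      have hr1 : ((Real.cosh L + v * ρ ^ 2 / 2) ^ 2 - 1) ^ (-q / 2)
          ≤ (u ^ 2 / 8 * (1 + (v * ρ) ^ 4)) ^ (-q / 2) :=
        Real.rpow_le_rpow_of_nonpos hM0 hM (by linarith)
      have hsplit : (u ^ 2 / 8 * (1 + (v * ρ) ^ 4)) ^ (-q / 2)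
          = (8 : ℝ) ^ (q / 2) * (u ^ 2) ^ (-q / 2) * (1 + (v * ρ) ^ 4) ^ (-q / 2) := by
        rw [Real.mul_rpow (by positivity) (by positivity),
          Real.div_rpow (by positivity) (by norm_num : (0 : ℝ) ≤ 8), h8, div_inv_eq_mul]
        ring
      have hρpow : ρ ^ (n - 2) = u ^ (n - 2) * (v * ρ) ^ (n - 2) := by
        rw [← mul_pow]
        congr 1
        rw [← mul_assoc, huv, one_mul]
      calc Real.exp (-((n : ℝ) * L)) *
            ((Real.cosh L + v * ρ ^ 2 / 2) ^ 2 - 1) ^ (-q / 2) * ρ ^ (n - 2)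
          ≤ Real.exp (-((n : ℝ) * L)) *
            (u ^ 2 / 8 * (1 + (v * ρ) ^ 4)) ^ (-q / 2) * ρ ^ (n - 2) :=
            mul_le_mul_of_nonneg_right
              (mul_le_mul_of_nonneg_left hr1 (Real.exp_pos _).le) (by positivity)
        _ = K * f (v * ρ) := by
            rw [hsplit, hu2q, hρpow, hun, hK]
            show _ = _ * ((1 + (v*ρ) ^ 4) ^ (-q / 2) * (v*ρ) ^ (n - 2))
            rw [show Real.exp (-(L * (2 + q)))
                = Real.exp (-((n : ℝ) * L)) * Real.exp (-(q * L)) *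
                  Real.exp (((n : ℝ) - 2) * L) by
              rw [← Real.exp_add, ← Real.exp_add]; congr 1; ring]
            ring
    -- integrability of the dominating function
    have hcomp : IntegrableOn (fun ρ : ℝ => f (v * ρ)) (Set.Ioi (0 : ℝ)) := by
      have := (integrableOn_Ioi_comp_mul_left_iff f 0 hv0).mpr (by simpa using hI)
      simpa using this
    have hg : IntegrableOn (fun ρ : ℝ => K * f (v * ρ)) (Set.Ioi (0 : ℝ)) := hcomp.const_mul K
    -- integrability of the integrand
    have hmeas : Continuous (fun ρ : ℝ => Real.exp (-((n : ℝ) * L)) *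
        ((Real.cosh L + v * ρ ^ 2 / 2) ^ 2 - 1) ^ (-q / 2) * ρ ^ (n - 2)) := by
      refine Continuous.mul ?_ (continuous_pow _)
      refine Continuous.mul continuous_const ?_
      refine Continuous.rpow_const ?_ fun ρ => Or.inl (ne_of_gt (hbase ρ))
      exact ((continuous_const.add ((continuous_const.mul (continuous_pow 2)).div_const 2)).pow 2).sub continuous_const
    have hfint : IntegrableOn (fun ρ : ℝ => Real.exp (-((n : ℝ) * L)) *
        ((Real.cosh L + v * ρ ^ 2 / 2) ^ 2 - 1) ^ (-q / 2) * ρ ^ (n - 2))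
        (Set.Ioi (0 : ℝ)) := by
      refine hg.mono' hmeas.aestronglyMeasurable.restrict ?_
      filter_upwards [ae_restrict_mem measurableSet_Ioi] with ρ hρ
      have hρ0 : (0 : ℝ) < ρ := hρ
      rw [Real.norm_eq_abs, abs_of_nonneg (by
        have := (hbase ρ).le
        positivity)]
      exact key ρ hρ
    have hval : (∫ ρ in Set.Ioi (0 : ℝ), K * f (v * ρ)) = K * (u * I) := by
      rw [MeasureTheory.integral_const_mul]
      congr 1
      rw [integral_comp_mul_left_Ioi f 0 hv0, mul_zero, smul_eq_mul, ← hIdef]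
      congr 1
      rw [hv, Real.exp_neg, inv_inv, hu]
    have hexp : Real.exp (-(L * (2 + q))) * u = Real.exp (-(L * (1 + q))) := by
      rw [hu, ← Real.exp_add]
      congr 1
      ring
    calc (∫ ρ in Set.Ioi (0 : ℝ), Real.exp (-((n : ℝ) * L)) *
            ((Real.cosh L + v * ρ ^ 2 / 2) ^ 2 - 1) ^ (-q / 2) * ρ ^ (n - 2))
        ≤ ∫ ρ in Set.Ioi (0 : ℝ), K * f (v * ρ) :=
          setIntegral_mono_on hfint hg measurableSet_Ioi key
      _ = K * (u * I) := hval
      _ = (8 : ℝ) ^ (q / 2) * I * Real.exp (-(L * (1 + q))) := by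
          rw [hK, ← hexp]; ring
      _ ≤ ((8 : ℝ) ^ (q / 2) * I + 1) * Real.exp (-(L * (1 + q))) := by
          have he := Real.exp_pos (-(L * (1 + q)))
          nlinarith [he]
  · intro C
    have h1q : (0 : ℝ) < 1 + q := by linarith
    have h2 : Tendsto (fun L : ℝ => -(L * (1 + q))) atTop atBot :=
      tendsto_neg_atTop_atBot.comp (tendsto_id.atTop_mul_const h1q)
    have h3 : Tendsto (fun L : ℝ => Real.exp (-(L * (1 + q)))) atTop (nhds 0) :=
      Real.tendsto_exp_atBot.comp h2
    simpa using h3.const_mul C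
end

section
/- Let n ≥ 3 be an integer and let q be a real number with q ≥ n/2. Then there exists a constant C > 0 such that for all L ≥ 1 and all σ ≥ 1, e^{−L(n−1)} σ^{n−2} ((cosh L + e^{−L} σ²/2)² − 1)^{−q/2} ≤ C e^{L(1−q)} σ^{−2}. In particular, since q > 1, this tends to 0 as L → ∞ uniformly in σ ≥ 1. -/
open MeasureTheory Real Filter

private lemma logeq_aux {a b : ℝ} (ha : 0 < a) (hb : 0 < b) (h : Real.log a = Real.log b) :
    a = b := by rw [← Real.exp_log ha, ← Real.exp_log hb, h]

/-- Bottom-edge estimate `E₋,L`: for `n ≥ 3` and `q ≥ n/2`, there is `C > 0` with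
`e^{−L(n−1)} σ^{n−2} ((cosh L + e^{−L} σ²/2)² − 1)^{−q/2} ≤ C e^{L(1−q)} σ^{−2}`
for all `L ≥ 1, σ ≥ 1`; since `q > 1`, the quantity tends to `0` as `L → ∞`,
uniformly in `σ ≥ 1`. -/
theorem stmt_3 (n : ℕ) (hn : 3 ≤ n) (q : ℝ) (hq : (n : ℝ) / 2 ≤ q) :
    (∃ C : ℝ, 0 < C ∧ ∀ L : ℝ, 1 ≤ L → ∀ σ : ℝ, 1 ≤ σ →
      Real.exp (-(L * ((n : ℝ) - 1))) * σ ^ (n - 2) *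
          ((Real.cosh L + Real.exp (-L) * σ ^ 2 / 2) ^ 2 - 1) ^ (-q / 2)
        ≤ C * Real.exp (L * (1 - q)) / σ ^ 2) ∧
    (1 < q) ∧
    (∀ ε : ℝ, 0 < ε → ∃ L₀ : ℝ, ∀ L : ℝ, L₀ ≤ L → ∀ σ : ℝ, 1 ≤ σ →
      Real.exp (-(L * ((n : ℝ) - 1))) * σ ^ (n - 2) *
          ((Real.cosh L + Real.exp (-L) * σ ^ 2 / 2) ^ 2 - 1) ^ (-q / 2) < ε) := by
  have hn2 : ((n - 2 : ℕ) : ℝ) = (n : ℝ) - 2 := by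
    have : (2:ℕ) ≤ n := by omega
    push_cast [Nat.cast_sub this]
    ring
  have hnR : (3 : ℝ) ≤ (n : ℝ) := by exact_mod_cast hn
  have hq1 : 1 < q := by linarith
  have hq0 : 0 < q := by linarith
  have hqn : 0 ≤ q - (n:ℝ)/2 := by linarith
  set C : ℝ := (2:ℝ) ^ (2*q) with hCdef
  have hC : 0 < C := Real.rpow_pos_of_pos two_pos _
  have key : ∀ L : ℝ, 1 ≤ L → ∀ σ : ℝ, 1 ≤ σ →
      Real.exp (-(L * ((n : ℝ) - 1))) * σ ^ (n - 2) *
          ((Real.cosh L + Real.exp (-L) * σ ^ 2 / 2) ^ 2 - 1) ^ (-q / 2)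
        ≤ C * Real.exp (L * (1 - q)) / σ ^ 2 := by
    intro L hL σ hσ
    have hσ0 : (0:ℝ) < σ := by linarith
    set X : ℝ := Real.cosh L + Real.exp (-L) * σ ^ 2 / 2 with hXdef
    have hB0 : (0:ℝ) < Real.exp (-L) * σ ^ 2 / 2 := by positivity
    have hA0 : (0:ℝ) < Real.exp L / 2 := by positivity
    have hXA : Real.exp L / 2 ≤ X := by
      rw [hXdef, Real.cosh_eq]
      have h1 := Real.exp_pos (-L)
      nlinarith
    have hXB : Real.exp (-L) * σ ^ 2 / 2 ≤ X := by
      have := Real.cosh_pos (x := L)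
      rw [hXdef]; linarith
    have hX0 : (0:ℝ) < X := lt_of_lt_of_le hA0 hXA
    have hXe : Real.exp 1 / 2 ≤ X := by
      have : Real.exp 1 ≤ Real.exp L := Real.exp_le_exp.mpr hL
      linarith
    have hX2 : X ^ 2 / 4 ≤ X ^ 2 - 1 := by
      nlinarith [Real.exp_one_gt_d9, hXe]
    have hX24 : (0:ℝ) < X ^ 2 / 4 := by positivity
    have step1 : (X ^ 2 - 1) ^ (-q / 2) ≤ (X ^ 2 / 4) ^ (-q / 2) :=
      Real.rpow_le_rpow_of_nonpos hX24 hX2 (by linarith)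
    have step2 : (X ^ 2 / 4 : ℝ) ^ (-q / 2) = (2:ℝ) ^ q * X ^ (-q) := by
      apply logeq_aux (by positivity) (by positivity)
      rw [Real.log_rpow hX24, Real.log_mul (by positivity) (by positivity),
        Real.log_rpow two_pos, Real.log_rpow hX0,
        Real.log_div (by positivity) (by norm_num),
        show (4:ℝ) = 2^(2:ℕ) by norm_num, Real.log_pow, Real.log_pow]
      push_cast
      ring
    have step3 : X ^ (-q) ≤ (Real.exp L / 2) ^ ((n:ℝ)/2 - q)
        * (Real.exp (-L) * σ ^ 2 / 2) ^ (-((n:ℝ)/2)) := by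
      have h1 : (Real.exp L / 2) ^ (q - (n:ℝ)/2) ≤ X ^ (q - (n:ℝ)/2) :=
        Real.rpow_le_rpow hA0.le hXA hqn
      have h2 : (Real.exp (-L) * σ ^ 2 / 2) ^ ((n:ℝ)/2) ≤ X ^ ((n:ℝ)/2) :=
        Real.rpow_le_rpow hB0.le hXB (by positivity)
      have h3 : (Real.exp L / 2) ^ (q - (n:ℝ)/2) * (Real.exp (-L) * σ ^ 2 / 2) ^ ((n:ℝ)/2)
          ≤ X ^ q := by
        calc (Real.exp L / 2) ^ (q - (n:ℝ)/2) * (Real.exp (-L) * σ ^ 2 / 2) ^ ((n:ℝ)/2)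
            ≤ X ^ (q - (n:ℝ)/2) * X ^ ((n:ℝ)/2) :=
              mul_le_mul h1 h2 (Real.rpow_nonneg hB0.le _) (Real.rpow_nonneg hX0.le _)
          _ = X ^ q := by rw [← Real.rpow_add hX0]; ring_nf
      rw [Real.rpow_neg hX0.le, show (n:ℝ)/2 - q = -(q - (n:ℝ)/2) by ring,
        Real.rpow_neg hA0.le, Real.rpow_neg hB0.le, ← mul_inv]
      exact inv_anti₀ (by positivity) h3
    have hfac : (0:ℝ) ≤ Real.exp (-(L * ((n:ℝ) - 1))) * σ ^ (n - 2) := by positivity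
    have step4 : Real.exp (-(L * ((n:ℝ) - 1))) * σ ^ (n - 2) *
        ((2:ℝ) ^ q * ((Real.exp L / 2) ^ ((n:ℝ)/2 - q)
          * (Real.exp (-L) * σ ^ 2 / 2) ^ (-((n:ℝ)/2))))
        = C * Real.exp (L * (1 - q)) / σ ^ 2 := by
      have e1 : Real.log (Real.exp L / 2) = L - Real.log 2 := by
        rw [Real.log_div (Real.exp_ne_zero L) two_ne_zero, Real.log_exp]
      have e2 : Real.log (Real.exp (-L) * σ ^ 2 / 2) = -L + 2 * Real.log σ - Real.log 2 := by
        rw [Real.log_div (by positivity) two_ne_zero,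
          Real.log_mul (Real.exp_ne_zero _) (by positivity), Real.log_exp, Real.log_pow]
        push_cast; ring
      have e3 : Real.log (C * Real.exp (L * (1 - q))) = 2 * q * Real.log 2 + L * (1 - q) := by
        rw [Real.log_mul (ne_of_gt hC) (Real.exp_ne_zero _), hCdef,
          Real.log_rpow two_pos, Real.log_exp]
      have e4 : Real.log (σ ^ (n - 2)) = ((n:ℝ) - 2) * Real.log σ := by
        rw [Real.log_pow, hn2]
      have e5 : Real.log (σ ^ 2) = 2 * Real.log σ := by
        rw [Real.log_pow]; push_cast; ring
      apply logeq_aux (by positivity) (by positivity)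
      rw [Real.log_mul (by positivity) (by positivity),
        Real.log_mul (by positivity) (by positivity),
        Real.log_mul (by positivity) (by positivity),
        Real.log_mul (by positivity) (by positivity),
        Real.log_div (by positivity) (by positivity),
        Real.log_rpow two_pos, Real.log_rpow hA0, Real.log_rpow hB0,
        Real.log_exp, e1, e2, e3, e4, e5]
      ring
    calc Real.exp (-(L * ((n:ℝ) - 1))) * σ ^ (n - 2) * (X ^ 2 - 1) ^ (-q / 2)
        ≤ Real.exp (-(L * ((n:ℝ) - 1))) * σ ^ (n - 2) *
          ((2:ℝ) ^ q * ((Real.exp L / 2) ^ ((n:ℝ)/2 - q)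
            * (Real.exp (-L) * σ ^ 2 / 2) ^ (-((n:ℝ)/2)))) := by
          apply mul_le_mul_of_nonneg_left _ hfac
          calc (X ^ 2 - 1) ^ (-q / 2) ≤ (X ^ 2 / 4) ^ (-q / 2) := step1
            _ = (2:ℝ) ^ q * X ^ (-q) := step2
            _ ≤ _ := mul_le_mul_of_nonneg_left step3 (Real.rpow_nonneg (by norm_num) _)
      _ = C * Real.exp (L * (1 - q)) / σ ^ 2 := step4
  refine ⟨⟨C, hC, key⟩, hq1, ?_⟩
  intro ε hε
  set t : ℝ := Real.log (ε / C) with htdef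
  refine ⟨max 1 (t / (1 - q) + 1), fun L hL σ hσ => ?_⟩
  have hL1 : 1 ≤ L := le_trans (le_max_left _ _) hL
  have hLt : t / (1 - q) + 1 ≤ L := le_trans (le_max_right _ _) hL
  have hσ0 : (0:ℝ) < σ := by linarith
  have h1q : 1 - q < 0 := by linarith
  have hexp : Real.exp (L * (1 - q)) < ε / C := by
    rw [← Real.exp_log (show (0:ℝ) < ε / C by positivity), ← htdef]
    apply Real.exp_lt_exp.mpr
    have hd : t / (1 - q) * (1 - q) = t := div_mul_cancel₀ _ (by linarith)
    nlinarith
  calc Real.exp (-(L * ((n : ℝ) - 1))) * σ ^ (n - 2) *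
        ((Real.cosh L + Real.exp (-L) * σ ^ 2 / 2) ^ 2 - 1) ^ (-q / 2)
      ≤ C * Real.exp (L * (1 - q)) / σ ^ 2 := key L hL1 σ hσ
    _ ≤ C * Real.exp (L * (1 - q)) := by
        apply div_le_self (by positivity)
        nlinarith
    _ < ε := by
        have := mul_lt_mul_of_pos_left hexp hC
        rwa [mul_div_cancel₀ _ (ne_of_gt hC)] at this
end

section
/- Let n ≥ 3 be an integer and let q be a real number with q ≥ n/2. Then there exists a constant C > 0 such that for all L ≥ 1 and all σ ≥ 1, ∫_{−L}^{0} e^{x(n−1)} σ^{n−2} (2/(e^x + e^{−x} + e^x σ²))^q dx ≤ C σ^{−2}. In particular this tends to 0 as σ → ∞, uniformly in L ≥ 1. -/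
open MeasureTheory Real Filter

lemma stmt5_pointwise (n : ℕ) (hn : 3 ≤ n) (q : ℝ) (hq : (n : ℝ) / 2 ≤ q)
    (σ : ℝ) (hσ : 1 ≤ σ) (x : ℝ) :
    Real.exp (x * ((n : ℝ) - 1)) * σ ^ (n - 2) *
      (2 / (Real.exp x + Real.exp (-x) + Real.exp x * σ ^ 2)) ^ q
    ≤ (2 : ℝ) ^ ((n : ℝ) / 2) * Real.exp (x * ((n : ℝ) / 2 - 1)) / σ ^ 2 := by
  set a : ℝ := (n : ℝ) / 2 with ha
  have hn3 : (3 : ℝ) ≤ (n : ℝ) := by exact_mod_cast hn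
  have hσ0 : (0 : ℝ) < σ := lt_of_lt_of_le one_pos hσ
  set D : ℝ := Real.exp x + Real.exp (-x) + Real.exp x * σ ^ 2 with hD
  have hexp1 : Real.exp (x / 2) * Real.exp (-(x / 2)) = 1 := by
    rw [← Real.exp_add]; ring_nf; exact Real.exp_zero
  have hsq1 : Real.exp (x / 2) * Real.exp (x / 2) = Real.exp x := by
    rw [← Real.exp_add]; ring_nf
  have hsq2 : Real.exp (-(x / 2)) * Real.exp (-(x / 2)) = Real.exp (-x) := by
    rw [← Real.exp_add]; ring_nf
  have hcosh : (2 : ℝ) ≤ Real.exp x + Real.exp (-x) := by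
    nlinarith [sq_nonneg (Real.exp (x / 2) - Real.exp (-(x / 2)))]
  have hD2 : (2 : ℝ) ≤ D := by
    have : 0 ≤ Real.exp x * σ ^ 2 := by positivity
    simp only [hD]; linarith
  have hD0 : (0 : ℝ) < D := lt_of_lt_of_le two_pos hD2
  have ht0 : 0 < 2 / D := by positivity
  have ht1 : 2 / D ≤ 1 := by rw [div_le_one hD0]; linarith
  -- drop exponent from q to a
  have step1 : (2 / D) ^ q ≤ (2 / D) ^ a :=
    Real.rpow_le_rpow_of_exponent_ge ht0 ht1 hq
  -- bound 2/D
  have step2 : 2 / D ≤ 2 * Real.exp (-x) / σ ^ 2 := by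
    have h1 : Real.exp x * σ ^ 2 ≤ D := by
      have h2 : 0 < Real.exp x + Real.exp (-x) := by positivity
      simp only [hD]; linarith
    have h3 : 2 / D ≤ 2 / (Real.exp x * σ ^ 2) := by
      gcongr
    have h4 : 2 / (Real.exp x * σ ^ 2) = 2 * Real.exp (-x) / σ ^ 2 := by
      rw [Real.exp_neg]; field_simp
    linarith [h3, h4.le]
  have ha0 : 0 ≤ a := by positivity
  have step3 : (2 / D) ^ a ≤ (2 * Real.exp (-x) / σ ^ 2) ^ a :=
    Real.rpow_le_rpow (le_of_lt ht0) step2 ha0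
  -- compute the RHS of step3
  have hcomp : (2 * Real.exp (-x) / σ ^ 2) ^ a
      = 2 ^ a * Real.exp (-x * a) / σ ^ n := by
    rw [Real.div_rpow (by positivity) (by positivity),
      Real.mul_rpow (by norm_num) (Real.exp_nonneg _), ← Real.exp_mul]
    congr 1
    rw [← Real.rpow_natCast σ 2, ← Real.rpow_mul hσ0.le, ← Real.rpow_natCast σ n]
    congr 1
    rw [ha]
    push_cast
    ring
  have hpow : σ ^ n = σ ^ (n - 2) * σ ^ 2 := by
    rw [← pow_add]
    congr 1
    omega
  calc Real.exp (x * ((n : ℝ) - 1)) * σ ^ (n - 2) * (2 / D) ^ q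
      ≤ Real.exp (x * ((n : ℝ) - 1)) * σ ^ (n - 2) * (2 * Real.exp (-x) / σ ^ 2) ^ a := by
        have := le_trans step1 step3
        have h0 : 0 ≤ Real.exp (x * ((n : ℝ) - 1)) * σ ^ (n - 2) := by positivity
        exact mul_le_mul_of_nonneg_left this h0
    _ = (2 : ℝ) ^ a * Real.exp (x * (a - 1)) / σ ^ 2 := by
        rw [hcomp, hpow]
        have h2a : (n : ℝ) = 2 * a := by rw [ha]; ring
        have hexp : Real.exp (x * (a - 1))
            = Real.exp (x * ((n : ℝ) - 1)) * Real.exp (-x * a) := by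
          rw [← Real.exp_add]
          congr 1
          rw [h2a]; ring
        rw [hexp]
        set E1 := Real.exp (x * ((n : ℝ) - 1)) with hE1
        set E2 := Real.exp (-x * a) with hE2
        have hσ2 : (σ:ℝ) ^ 2 ≠ 0 := by positivity
        have hσn2 : (σ:ℝ) ^ (n - 2) ≠ 0 := by positivity
        field_simp

/-- Lower lateral-surface estimate on `{−L ≤ x₁ ≤ 0}` of `S_L`: for `n ≥ 3`, `q ≥ n/2`,
there is `C > 0` with `∫_{−L}^0 e^{x(n−1)} σ^{n−2} (2/(e^x + e^{−x} + e^x σ²))^q dx ≤ C σ^{−2}`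
for all `L ≥ 1, σ ≥ 1`; in particular the integral tends to `0` as `σ → ∞`,
uniformly in `L ≥ 1`. -/
theorem stmt_5 (n : ℕ) (hn : 3 ≤ n) (q : ℝ) (hq : (n : ℝ) / 2 ≤ q) :
    (∃ C : ℝ, 0 < C ∧ ∀ L : ℝ, 1 ≤ L → ∀ σ : ℝ, 1 ≤ σ →
      (∫ x in (-L)..(0:ℝ),
          Real.exp (x * ((n : ℝ) - 1)) * σ ^ (n - 2) *
            (2 / (Real.exp x + Real.exp (-x) + Real.exp x * σ ^ 2)) ^ q)
        ≤ C / σ ^ 2) ∧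
    (∀ ε : ℝ, 0 < ε → ∃ σ₀ : ℝ, ∀ σ : ℝ, σ₀ ≤ σ → ∀ L : ℝ, 1 ≤ L →
      (∫ x in (-L)..(0:ℝ),
          Real.exp (x * ((n : ℝ) - 1)) * σ ^ (n - 2) *
            (2 / (Real.exp x + Real.exp (-x) + Real.exp x * σ ^ 2)) ^ q) < ε) := by
  set a : ℝ := (n : ℝ) / 2 with ha
  have hn3 : (3 : ℝ) ≤ (n : ℝ) := by exact_mod_cast hn
  have hc0 : 0 < a - 1 := by rw [ha]; linarith
  set C : ℝ := 2 ^ a / (a - 1) with hC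
  have hC0 : 0 < C := by positivity
  have hq0 : 0 ≤ q := le_trans (by positivity) hq
  have main : ∀ L : ℝ, 1 ≤ L → ∀ σ : ℝ, 1 ≤ σ →
      (∫ x in (-L)..(0:ℝ),
          Real.exp (x * ((n : ℝ) - 1)) * σ ^ (n - 2) *
            (2 / (Real.exp x + Real.exp (-x) + Real.exp x * σ ^ 2)) ^ q)
        ≤ C / σ ^ 2 := by
    intro L hL σ hσ
    have hσ0 : (0 : ℝ) < σ := lt_of_lt_of_le one_pos hσ
    have hLle : (-L : ℝ) ≤ 0 := by linarith
    -- continuity of f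
    have hcontf : Continuous fun x : ℝ =>
        Real.exp (x * ((n : ℝ) - 1)) * σ ^ (n - 2) *
          (2 / (Real.exp x + Real.exp (-x) + Real.exp x * σ ^ 2)) ^ q := by
      apply Continuous.mul
      · fun_prop
      · apply Continuous.rpow_const
        · apply Continuous.div continuous_const (by fun_prop)
          intro x
          positivity
        · intro x; exact Or.inr hq0
    have hcontg : Continuous fun x : ℝ =>
        (2 : ℝ) ^ a * Real.exp (x * (a - 1)) / σ ^ 2 := by fun_prop
    have hmono := intervalIntegral.integral_mono_on (μ := volume) hLle
      (hcontf.intervalIntegrable (-L) 0) (hcontg.intervalIntegrable (-L) 0)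
      (fun x _ => stmt5_pointwise n hn q hq σ hσ x)
    -- compute the g integral
    have hci : a - 1 ≠ 0 := ne_of_gt hc0
    have hint : (∫ x in (-L)..(0:ℝ), Real.exp (x * (a - 1)))
        = (a - 1)⁻¹ * (1 - Real.exp (-L * (a - 1))) := by
      rw [intervalIntegral.integral_comp_mul_right Real.exp hci]
      rw [integral_exp]
      simp [smul_eq_mul]
    have hgint : (∫ x in (-L)..(0:ℝ), (2 : ℝ) ^ a * Real.exp (x * (a - 1)) / σ ^ 2)
        ≤ C / σ ^ 2 := by
      have : (∫ x in (-L)..(0:ℝ), (2 : ℝ) ^ a * Real.exp (x * (a - 1)) / σ ^ 2)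
          = ((2:ℝ) ^ a / σ ^ 2) * ∫ x in (-L)..(0:ℝ), Real.exp (x * (a - 1)) := by
        rw [← intervalIntegral.integral_const_mul]
        congr 1
        ext x
        ring
      rw [this, hint]
      have he : 0 < Real.exp (-L * (a - 1)) := Real.exp_pos _
      have hC' : C / σ ^ 2 = (2:ℝ) ^ a / σ ^ 2 * (a - 1)⁻¹ := by
        rw [hC]
        field_simp
      rw [hC']
      have h1 : (a - 1)⁻¹ * (1 - Real.exp (-L * (a - 1))) ≤ (a - 1)⁻¹ := by
        have h2 : 1 - Real.exp (-L * (a - 1)) ≤ 1 := by linarith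
        have h3 := mul_le_mul_of_nonneg_left h2 (inv_nonneg.mpr hc0.le)
        simpa using h3
      exact mul_le_mul_of_nonneg_left h1 (by positivity)
    exact le_trans hmono hgint
  refine ⟨⟨C, hC0, main⟩, ?_⟩
  intro ε hε
  refine ⟨max 1 (C / ε + 1), fun σ hσ L hL => ?_⟩
  have hσ1 : 1 ≤ σ := le_trans (le_max_left _ _) hσ
  have hσC : C / ε + 1 ≤ σ := le_trans (le_max_right _ _) hσ
  have hσ0 : (0 : ℝ) < σ := lt_of_lt_of_le one_pos hσ1
  have h1 : C / σ ^ 2 ≤ C / σ := by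
    apply div_le_div_of_nonneg_left hC0.le hσ0
    nlinarith
  have h2 : C / σ < ε := by
    rw [div_lt_iff₀ hσ0]
    have hkey : ε * (C / ε + 1) ≤ ε * σ := mul_le_mul_of_nonneg_left hσC hε.le
    have hdiv : ε * (C / ε) = C := by field_simp
    nlinarith [hkey, hdiv]
  calc _ ≤ C / σ ^ 2 := main L hL σ hσ1
    _ ≤ C / σ := h1
    _ < ε := h2
end

section
/- Let n ≥ 3 be an integer and let q be a real number with q ≥ n/2. Then there exists a constant C > 0 such that for all L ≥ 1 and all σ ≥ 1, ∫_{−L}^{0} e^{x(n−2)} σ^{n−3} (2/(e^x + e^{−x} + e^x σ²))^q dx ≤ C σ^{−2}. In particular this tends to 0 as σ → ∞, uniformly in L ≥ 1. -/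
open MeasureTheory Real Filter

lemma exp_integral_aux (c : ℝ) (hc : c ≠ 0) (a b : ℝ) :
    ∫ x in a..b, Real.exp (c * x) = (Real.exp (c * b) - Real.exp (c * a)) / c := by
  have hderiv : ∀ x ∈ Set.uIcc a b,
      HasDerivAt (fun y => Real.exp (c * y) / c) (Real.exp (c * x)) x := by
    intro x _
    have h1 : HasDerivAt (fun y : ℝ => c * y) c x := by
      simpa using (hasDerivAt_id x).const_mul c
    have h2 : HasDerivAt (fun y => Real.exp (c * y)) (Real.exp (c * x) * c) x :=
      (Real.hasDerivAt_exp (c * x)).comp x h1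
    have h3 := h2.div_const c
    simpa [mul_div_assoc, mul_div_cancel_right₀ _ hc] using h3
  have hcont : IntervalIntegrable (fun x => Real.exp (c * x)) volume a b :=
    (Real.continuous_exp.comp (continuous_const.mul continuous_id)).intervalIntegrable a b
  have := intervalIntegral.integral_eq_sub_of_hasDerivAt hderiv hcont
  rw [this]
  ring

lemma ptwise_aux (n : ℕ) (hn : 3 ≤ n) (q : ℝ) (hq : (n : ℝ) / 2 ≤ q)
    (σ : ℝ) (hσ : 1 ≤ σ) (x : ℝ) :
    Real.exp (x * ((n : ℝ) - 2)) * σ ^ (n - 3) *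
        (2 / (Real.exp x + Real.exp (-x) + Real.exp x * σ ^ 2)) ^ q
      ≤ 2 ^ q * Real.exp ((q - 1) * x) / σ ^ 2 := by
  have hσ0 : (0:ℝ) < σ := lt_of_lt_of_le one_pos hσ
  have hn3 : (3:ℝ) ≤ (n:ℝ) := by exact_mod_cast hn
  set D := Real.exp x + Real.exp (-x) + Real.exp x * σ ^ 2 with hDdef
  have hDpos : 0 < D := by positivity
  set a : ℝ := ((n : ℝ) - 1) / 2 with hadef
  have ha0 : 0 ≤ a := by rw [hadef]; linarith
  have hqa : 0 ≤ q - a := by rw [hadef]; linarith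
  have h1 : Real.exp (-x) ≤ D := by
    rw [hDdef]; nlinarith [Real.exp_pos x, mul_pos (Real.exp_pos x) (pow_pos hσ0 2)]
  have h2 : Real.exp x * σ ^ 2 ≤ D := by
    rw [hDdef]; nlinarith [Real.exp_pos x, Real.exp_pos (-x)]
  have hσ2a : ((σ : ℝ) ^ (2:ℕ)) ^ a = σ ^ ((n:ℝ) - 1) := by
    rw [← Real.rpow_natCast σ 2, ← Real.rpow_mul hσ0.le]
    congr 1
    rw [hadef]; push_cast; ring
  set m : ℝ := Real.exp (-x * (q - a)) * (Real.exp (x * a) * σ ^ ((n:ℝ) - 1)) with hmdef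
  have hmpos : 0 < m := by rw [hmdef]; positivity
  have hm : m ≤ D ^ q := by
    have e1 : Real.exp (-x) ^ (q - a) ≤ D ^ (q - a) :=
      Real.rpow_le_rpow (Real.exp_pos _).le h1 hqa
    have e2 : (Real.exp x * σ ^ 2) ^ a ≤ D ^ a :=
      Real.rpow_le_rpow (by positivity) h2 ha0
    have key : (Real.exp (-x)) ^ (q - a) * ((Real.exp x * σ ^ 2) ^ a)
        ≤ D ^ (q - a) * D ^ a :=
      mul_le_mul e1 e2 (by positivity) (by positivity)
    have hsplit : D ^ (q - a) * D ^ a = D ^ q := by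
      rw [← Real.rpow_add hDpos]; ring_nf
    calc m = (Real.exp (-x)) ^ (q - a) * ((Real.exp x * σ ^ 2) ^ a) := by
            rw [hmdef, Real.mul_rpow (Real.exp_pos x).le (by positivity), hσ2a,
              ← Real.exp_mul, ← Real.exp_mul]
      _ ≤ D ^ (q - a) * D ^ a := key
      _ = D ^ q := hsplit
  have hfrac : (2 / D) ^ q = 2 ^ q / D ^ q := Real.div_rpow (by norm_num : (0:ℝ) ≤ 2) hDpos.le q
  have hdiv : 2 ^ q / D ^ q ≤ 2 ^ q / m :=
    div_le_div_of_nonneg_left (by positivity) hmpos hm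
  have hσn3 : (σ : ℝ) ^ (n - 3) = Real.exp (Real.log σ * ((n:ℝ) - 3)) := by
    rw [← Real.rpow_natCast σ (n - 3), Real.rpow_def_of_pos hσ0]
    congr 1
    rw [Nat.cast_sub hn]; push_cast; ring
  have hσ2 : (σ : ℝ) ^ (2:ℕ) = Real.exp (Real.log σ * 2) := by
    rw [← Real.rpow_natCast σ 2, Real.rpow_def_of_pos hσ0]
    norm_num
  have hσn1 : (σ : ℝ) ^ ((n:ℝ) - 1) = Real.exp (Real.log σ * ((n:ℝ) - 1)) :=
    Real.rpow_def_of_pos hσ0 _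
  have hmain : Real.exp (x * ((n : ℝ) - 2)) * σ ^ (n - 3) * (2 ^ q / m)
      = 2 ^ q * Real.exp ((q - 1) * x) / σ ^ 2 := by
    calc Real.exp (x * ((n : ℝ) - 2)) * σ ^ (n - 3) * (2 ^ q / m)
        = 2 ^ q * (Real.exp (x * ((n:ℝ) - 2) + Real.log σ * ((n:ℝ) - 3)) /
            Real.exp (-x * (q - a) + (x * a + Real.log σ * ((n:ℝ) - 1)))) := by
          rw [hσn3, hmdef, hσn1, ← Real.exp_add, ← Real.exp_add, ← Real.exp_add]; ring
      _ = 2 ^ q * Real.exp ((x * ((n:ℝ) - 2) + Real.log σ * ((n:ℝ) - 3)) -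
            (-x * (q - a) + (x * a + Real.log σ * ((n:ℝ) - 1)))) := by
          rw [Real.exp_sub]
      _ = 2 ^ q * Real.exp ((q - 1) * x + (-(Real.log σ * 2))) := by
          congr 1
          rw [hadef]; ring
      _ = 2 ^ q * Real.exp ((q - 1) * x) / σ ^ 2 := by
          rw [Real.exp_add, hσ2, Real.exp_neg]; ring
  calc Real.exp (x * ((n : ℝ) - 2)) * σ ^ (n - 3) * (2 / D) ^ q
      = Real.exp (x * ((n : ℝ) - 2)) * σ ^ (n - 3) * (2 ^ q / D ^ q) := by rw [hfrac]
    _ ≤ Real.exp (x * ((n : ℝ) - 2)) * σ ^ (n - 3) * (2 ^ q / m) :=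
        mul_le_mul_of_nonneg_left hdiv (by positivity)
    _ = 2 ^ q * Real.exp ((q - 1) * x) / σ ^ 2 := hmain

/-- Lateral second-fundamental-form term on `{−L ≤ x₁ ≤ 0}` of `S_L`: for `n ≥ 3`,
`q ≥ n/2`, there is `C > 0` with
`∫_{−L}^0 e^{x(n−2)} σ^{n−3} (2/(e^x + e^{−x} + e^x σ²))^q dx ≤ C σ^{−2}` for all
`L ≥ 1, σ ≥ 1`; in particular the integral tends to `0` as `σ → ∞`, uniformly in `L ≥ 1`. -/
theorem stmt_6 (n : ℕ) (hn : 3 ≤ n) (q : ℝ) (hq : (n : ℝ) / 2 ≤ q) :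
    (∃ C : ℝ, 0 < C ∧ ∀ L : ℝ, 1 ≤ L → ∀ σ : ℝ, 1 ≤ σ →
      (∫ x in (-L)..(0:ℝ),
          Real.exp (x * ((n : ℝ) - 2)) * σ ^ (n - 3) *
            (2 / (Real.exp x + Real.exp (-x) + Real.exp x * σ ^ 2)) ^ q)
        ≤ C / σ ^ 2) ∧
    (∀ ε : ℝ, 0 < ε → ∃ σ₀ : ℝ, ∀ σ : ℝ, σ₀ ≤ σ → ∀ L : ℝ, 1 ≤ L →
      (∫ x in (-L)..(0:ℝ),
          Real.exp (x * ((n : ℝ) - 2)) * σ ^ (n - 3) *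
            (2 / (Real.exp x + Real.exp (-x) + Real.exp x * σ ^ 2)) ^ q) < ε) := by
  have hn3 : (3:ℝ) ≤ (n:ℝ) := by exact_mod_cast hn
  have hq1 : (1:ℝ)/2 ≤ q - 1 := by linarith
  have hq0 : (0:ℝ) < q - 1 := by linarith
  set C : ℝ := 2 * 2 ^ q with hCdef
  have hCpos : 0 < C := by
    have := Real.rpow_pos_of_pos (by norm_num : (0:ℝ) < 2) q
    positivity
  have main : ∀ L : ℝ, 1 ≤ L → ∀ σ : ℝ, 1 ≤ σ →
      (∫ x in (-L)..(0:ℝ),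
          Real.exp (x * ((n : ℝ) - 2)) * σ ^ (n - 3) *
            (2 / (Real.exp x + Real.exp (-x) + Real.exp x * σ ^ 2)) ^ q)
        ≤ C / σ ^ 2 := by
    intro L hL σ hσ
    have hσ0 : (0:ℝ) < σ := lt_of_lt_of_le one_pos hσ
    have hab : (-L) ≤ (0:ℝ) := by linarith
    -- continuity / integrability of the integrand
    have hDc : Continuous fun x : ℝ => Real.exp x + Real.exp (-x) + Real.exp x * σ ^ 2 := by
      continuity
    have hDpos : ∀ x : ℝ, 0 < Real.exp x + Real.exp (-x) + Real.exp x * σ ^ 2 := by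
      intro x; positivity
    have hfc : Continuous fun x : ℝ =>
        Real.exp (x * ((n : ℝ) - 2)) * σ ^ (n - 3) *
          (2 / (Real.exp x + Real.exp (-x) + Real.exp x * σ ^ 2)) ^ q := by
      apply Continuous.mul
      · continuity
      · apply Continuous.rpow_const
        · exact continuous_const.div hDc fun x => (hDpos x).ne'
        · intro x; right; linarith
    have hgc : Continuous fun x : ℝ => 2 ^ q * Real.exp ((q - 1) * x) / σ ^ 2 := by
      continuity
    have hfi : IntervalIntegrable (fun x : ℝ =>
        Real.exp (x * ((n : ℝ) - 2)) * σ ^ (n - 3) *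
          (2 / (Real.exp x + Real.exp (-x) + Real.exp x * σ ^ 2)) ^ q) volume (-L) 0 :=
      hfc.intervalIntegrable (-L) 0
    have hgi : IntervalIntegrable (fun x : ℝ => 2 ^ q * Real.exp ((q - 1) * x) / σ ^ 2)
        volume (-L) 0 := hgc.intervalIntegrable (-L) 0
    have hmono := intervalIntegral.integral_mono_on hab hfi hgi
      (fun x _ => ptwise_aux n hn q hq σ hσ x)
    refine hmono.trans ?_
    have hrw : (∫ x in (-L)..(0:ℝ), 2 ^ q * Real.exp ((q - 1) * x) / σ ^ 2)
        = (2 ^ q / σ ^ 2) * ∫ x in (-L)..(0:ℝ), Real.exp ((q - 1) * x) := by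
      rw [← intervalIntegral.integral_const_mul]
      congr 1; ext x; ring
    rw [hrw, exp_integral_aux (q - 1) hq0.ne' (-L) 0]
    have hexp1 : Real.exp ((q - 1) * 0) = 1 := by norm_num
    rw [hexp1]
    have hb : (1 - Real.exp ((q - 1) * (-L))) / (q - 1) ≤ 2 := by
      have h1 : 0 < Real.exp ((q - 1) * (-L)) := Real.exp_pos _
      rw [div_le_iff₀ hq0]
      nlinarith
    have h2q : (0:ℝ) < 2 ^ q := Real.rpow_pos_of_pos (by norm_num) q
    have hnn : (0:ℝ) ≤ 2 ^ q / σ ^ 2 := by positivity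
    calc (2 ^ q / σ ^ 2) * ((1 - Real.exp ((q - 1) * (-L))) / (q - 1))
        ≤ (2 ^ q / σ ^ 2) * 2 := mul_le_mul_of_nonneg_left hb hnn
      _ = C / σ ^ 2 := by rw [hCdef]; ring
  refine ⟨⟨C, hCpos, main⟩, ?_⟩
  intro ε hε
  refine ⟨max 1 (Real.sqrt (C / ε) + 1), fun σ hσ L hL => ?_⟩
  have hσ1 : 1 ≤ σ := le_trans (le_max_left _ _) hσ
  have hσs : Real.sqrt (C / ε) + 1 ≤ σ := le_trans (le_max_right _ _) hσ
  have hsq : 0 ≤ Real.sqrt (C / ε) := Real.sqrt_nonneg _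
  have hσ0 : (0:ℝ) < σ := by linarith
  have hCε : Real.sqrt (C / ε) ^ 2 = C / ε := Real.sq_sqrt (by positivity)
  have hlt : C / σ ^ 2 < ε := by
    rw [div_lt_iff₀ (by positivity)]
    have : C / ε < σ ^ 2 := by nlinarith
    calc C = (C / ε) * ε := by field_simp
      _ < σ ^ 2 * ε := by nlinarith
      _ = ε * σ ^ 2 := by ring
  exact lt_of_le_of_lt (main L hL σ hσ1) hlt
end

section
/- Let n ≥ 3 be an integer, let q > n/2 be a real number, and let σ : [1, ∞) → [1, ∞) be a function with σ(L) → ∞ as L → ∞. Assume additionally that e^{L(n−1−q)} σ(L)^{n−2−2q} → 0 as L → ∞ if q < n − 1, and that L·σ(L)^{n−2−2q} → 0 as L → ∞ if q = n − 1 (no extra assumption if q > n − 1). Then both of the following hold as L → ∞: (i) e^{L(n−1)} σ(L)^{n−2} ((cosh L + e^L σ(L)²/2)² − 1)^{−q/2} → 0, and (ii) ∫₀^L e^{x(n−1)} σ(L)^{n−2} (2/(e^x + e^{−x} + e^x σ(L)²))^q dx → 0. -/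
open MeasureTheory Real Filter

private lemma alg1 (n : ℕ) (hn : 3 ≤ n) (q s L : ℝ) (hs : 0 < s) :
    exp (L*((n:ℝ)-1)) * s^(n-2) * (exp (2*L) * s^4 / 8) ^ (-q/2)
     = 8^(q/2) * (exp (L*((n:ℝ)-1-q)) * s^((n:ℝ)-2-2*q)) := by
  have h8 : (0:ℝ) < 8 := by norm_num
  have hcast : ((n-2:ℕ):ℝ) = (n:ℝ)-2 := by
    have h2 : 2 ≤ n := by omega
    push_cast [Nat.cast_sub h2]; ring
  rw [div_rpow (by positivity) h8.le, mul_rpow (Real.exp_pos _).le (by positivity),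
      ← Real.rpow_natCast s 4, ← Real.rpow_mul hs.le, ← Real.exp_mul,
      show (-q/2) = -(q/2) by ring, Real.rpow_neg h8.le, div_inv_eq_mul,
      ← Real.rpow_natCast s (n-2), hcast]
  push_cast
  rw [show 2*L*(-(q/2)) = L*(-q) by ring, show (4:ℝ)*(-(q/2)) = -(2*q) by ring]
  rw [show rexp (L*((n:ℝ)-1)) * s ^ ((n:ℝ)-2) * (rexp (L*(-q)) * s ^ (-(2*q)) * 8^(q/2))
        = (s ^ ((n:ℝ)-2) * s ^ (-(2*q))) * (rexp (L*((n:ℝ)-1)) * rexp (L*(-q))) * 8^(q/2) by ring,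
      ← Real.rpow_add hs, ← Real.exp_add]
  rw [show (n:ℝ)-2 + -(2*q) = (n:ℝ)-2-2*q by ring, show L*((n:ℝ)-1) + L*(-q) = L*((n:ℝ)-1-q) by ring]
  ring

private lemma alg2 (n : ℕ) (hn : 3 ≤ n) (q s x : ℝ) (hs : 0 < s) :
    exp (x*((n:ℝ)-1)) * s^(n-2) * (2/(exp x * s^2))^q
     = 2^q * (s^((n:ℝ)-2-2*q) * exp (x*((n:ℝ)-1-q))) := by
  have hcast : ((n-2:ℕ):ℝ) = (n:ℝ)-2 := by
    have h2 : 2 ≤ n := by omega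
    push_cast [Nat.cast_sub h2]; ring
  rw [div_rpow (by norm_num) (by positivity), mul_rpow (Real.exp_pos _).le (by positivity),
      ← Real.rpow_natCast s 2, ← Real.rpow_mul hs.le, ← Real.exp_mul,
      ← Real.rpow_natCast s (n-2), hcast]
  push_cast
  rw [show rexp (x*((n:ℝ)-1)) * s ^ ((n:ℝ)-2) * (2^q / (rexp (x*q) * s ^ ((2:ℝ)*q)))
        = 2^q * (rexp (x*((n:ℝ)-1)) * s ^ ((n:ℝ)-2) / (rexp (x*q) * s ^ ((2:ℝ)*q))) by ring]
  congr 1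
  rw [div_eq_iff (by positivity)]
  rw [show s ^ ((n:ℝ)-2-2*q) * rexp (x*((n:ℝ)-1-q)) * (rexp (x*q) * s ^ ((2:ℝ)*q))
        = (s ^ ((n:ℝ)-2-2*q) * s ^ ((2:ℝ)*q)) * (rexp (x*((n:ℝ)-1-q)) * rexp (x*q)) by ring,
      ← Real.rpow_add hs, ← Real.exp_add]
  ring_nf

private lemma expint (c L : ℝ) (hc : c ≠ 0) :
    ∫ x in (0:ℝ)..L, exp (x*c) = (exp (L*c) - 1)/c := by
  have h : ∀ x ∈ Set.uIcc (0:ℝ) L, HasDerivAt (fun y => exp (y*c)/c) (exp (x*c)) x := by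
    intro x _
    have h1 : HasDerivAt (fun y : ℝ => y*c) c x := by simpa using (hasDerivAt_id x).mul_const c
    have h2 := (h1.exp).div_const c
    rwa [mul_div_cancel_right₀ _ hc] at h2
  rw [intervalIntegral.integral_eq_sub_of_hasDerivAt h
      ((by fun_prop : Continuous fun x : ℝ => exp (x*c)).intervalIntegrable _ _)]
  rw [zero_mul, Real.exp_zero]
  ring

/-- Combined top-edge and upper lateral estimates along the cylinders
`C_L = {|x₁| ≤ L, |x̂| ≤ σ(L)}`: under the width condition (1.4) of the paper on
`σ : [1,∞) → [1,∞)`, both the top-edge flux term and the upper lateral flux term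
tend to `0` as `L → ∞`. -/
theorem stmt_8 (n : ℕ) (hn : 3 ≤ n) (q : ℝ) (hq : (n : ℝ) / 2 < q)
    (σ : ℝ → ℝ) (hσ1 : ∀ L : ℝ, 1 ≤ L → 1 ≤ σ L)
    (hσtop : Tendsto σ atTop atTop)
    (hcond1 : q < (n : ℝ) - 1 →
      Tendsto (fun L : ℝ => Real.exp (L * ((n : ℝ) - 1 - q)) * σ L ^ ((n : ℝ) - 2 - 2 * q))
        atTop (nhds 0))
    (hcond2 : q = (n : ℝ) - 1 →
      Tendsto (fun L : ℝ => L * σ L ^ ((n : ℝ) - 2 - 2 * q)) atTop (nhds 0)) :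
    Tendsto (fun L : ℝ =>
        Real.exp (L * ((n : ℝ) - 1)) * σ L ^ (n - 2) *
          ((Real.cosh L + Real.exp L * σ L ^ 2 / 2) ^ 2 - 1) ^ (-q / 2))
      atTop (nhds 0) ∧
    Tendsto (fun L : ℝ =>
        ∫ x in (0:ℝ)..L,
          Real.exp (x * ((n : ℝ) - 1)) * σ L ^ (n - 2) *
            (2 / (Real.exp x + Real.exp (-x) + Real.exp x * σ L ^ 2)) ^ q)
      atTop (nhds 0) := by
  have hn3 : (3:ℝ) ≤ (n:ℝ) := by exact_mod_cast hn
  have hq0 : 0 < q := by linarith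
  have heneg : (n:ℝ) - 2 - 2*q < 0 := by linarith
  -- σ L ^ e → 0
  have hsig0 : Tendsto (fun L => σ L ^ ((n:ℝ)-2-2*q)) atTop (nhds 0) := by
    have h := (tendsto_rpow_neg_atTop (show (0:ℝ) < -((n:ℝ)-2-2*q) by linarith)).comp hσtop
    simpa [Function.comp_def] using h
  -- exp (L c) σ L ^ e → 0
  have hE : Tendsto (fun L : ℝ => exp (L*((n:ℝ)-1-q)) * σ L ^ ((n:ℝ)-2-2*q)) atTop (nhds 0) := by
    rcases lt_trichotomy q ((n:ℝ)-1) with h | h | h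
    · exact hcond1 h
    · have heq : ∀ L : ℝ, exp (L*((n:ℝ)-1-q)) * σ L ^ ((n:ℝ)-2-2*q) = σ L ^ ((n:ℝ)-2-2*q) := by
        intro L
        rw [show (n:ℝ)-1-q = 0 by rw [h]; ring]
        simp
      simp only [heq]
      exact hsig0
    · apply squeeze_zero' (g := fun L : ℝ => exp (L*((n:ℝ)-1-q)))
      · filter_upwards [eventually_ge_atTop (1:ℝ)] with L hL
        exact mul_nonneg (Real.exp_pos _).le (Real.rpow_nonneg (by linarith [hσ1 L hL]) _)
      · filter_upwards [eventually_ge_atTop (1:ℝ)] with L hL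
        exact mul_le_of_le_one_right (Real.exp_pos _).le
          (Real.rpow_le_one_of_one_le_of_nonpos (hσ1 L hL) heneg.le)
      · exact Real.tendsto_exp_atBot.comp
          (Filter.Tendsto.atTop_mul_const_of_neg (by linarith : (n:ℝ)-1-q < 0) tendsto_id)
  constructor
  · -- top-edge term
    apply squeeze_zero'
      (g := fun L : ℝ => 8^(q/2) * (exp (L*((n:ℝ)-1-q)) * σ L ^ ((n:ℝ)-2-2*q)))
    · filter_upwards [eventually_ge_atTop (1:ℝ)] with L hL
      have hs : 1 ≤ σ L := hσ1 L hL
      have hX : (1:ℝ) ≤ cosh L + exp L * σ L ^2/2 := by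
        nlinarith [Real.one_le_cosh L, (Real.exp_pos L).le, sq_nonneg (σ L)]
      have h0 : (0:ℝ) ≤ (cosh L + exp L * σ L^2/2)^2 - 1 := by nlinarith
      exact mul_nonneg (mul_nonneg (Real.exp_pos _).le (pow_nonneg (by linarith) _))
        (Real.rpow_nonneg h0 _)
    · filter_upwards [eventually_ge_atTop (1:ℝ)] with L hL
      have hs : 1 ≤ σ L := hσ1 L hL
      have hs0 : (0:ℝ) < σ L := by linarith
      have hcosh : exp L / 2 ≤ cosh L := by
        rw [Real.cosh_eq]; nlinarith [(Real.exp_pos (-L)).le]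
      have hX1 : exp L * σ L^2/2 ≤ cosh L + exp L * σ L ^2/2 := by
        nlinarith [Real.one_le_cosh L]
      have hX2 : (2:ℝ) ≤ cosh L + exp L * σ L ^2/2 := by
        have h1 : (1:ℝ)+1 ≤ exp 1 := by linarith [Real.add_one_le_exp 1]
        have h2 : exp 1 ≤ exp L := Real.exp_le_exp.mpr hL
        nlinarith [(Real.exp_pos L).le, sq_nonneg (σ L - 1)]
      have hlow : exp (2*L) * σ L^4/8 ≤ (cosh L + exp L * σ L ^2/2)^2 - 1 := by
        have he2 : exp (2*L) = exp L * exp L := by rw [two_mul, Real.exp_add]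
        have hA : (exp L * σ L^2/2)^2 ≤ (cosh L + exp L * σ L ^2/2)^2 :=
          pow_le_pow_left₀ (by positivity) hX1 2
        have hB : (4:ℝ) ≤ (cosh L + exp L * σ L ^2/2)^2 := by nlinarith
        rw [he2]
        nlinarith [hA, hB]
      have hmono : ((cosh L + exp L * σ L ^2/2)^2 - 1)^(-q/2)
          ≤ (exp (2*L)*σ L^4/8)^(-q/2) :=
        Real.rpow_le_rpow_of_nonpos (by positivity) hlow (by linarith)
      calc exp (L*((n:ℝ)-1)) * σ L^(n-2) * ((cosh L + exp L * σ L ^2/2)^2 - 1)^(-q/2)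
          ≤ exp (L*((n:ℝ)-1)) * σ L^(n-2) * (exp (2*L)*σ L^4/8)^(-q/2) :=
            mul_le_mul_of_nonneg_left hmono
              (mul_nonneg (Real.exp_pos _).le (pow_nonneg hs0.le _))
        _ = 8^(q/2) * (exp (L*((n:ℝ)-1-q)) * σ L ^ ((n:ℝ)-2-2*q)) := alg1 n hn q (σ L) L hs0
    · simpa using hE.const_mul ((8:ℝ)^(q/2))
  · -- lateral term
    set c : ℝ := (n:ℝ)-1-q with hcdef
    -- pointwise setup valid for L ≥ 1
    have key : ∀ L : ℝ, 1 ≤ L →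
        (∫ x in (0:ℝ)..L, exp (x*((n:ℝ)-1)) * σ L ^ (n-2) *
            (2 / (exp x + exp (-x) + exp x * σ L ^ 2)) ^ q)
          ≤ (2^q * σ L ^ ((n:ℝ)-2-2*q)) * ∫ x in (0:ℝ)..L, exp (x*c) := by
      intro L hL
      have hs : 1 ≤ σ L := hσ1 L hL
      have hs0 : (0:ℝ) < σ L := by linarith
      have hDpos : ∀ x : ℝ, (0:ℝ) < exp x + exp (-x) + exp x * σ L ^ 2 := by
        intro x; positivity
      have hcontf : Continuous fun x : ℝ => exp (x*((n:ℝ)-1)) * σ L ^ (n-2) *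
          (2 / (exp x + exp (-x) + exp x * σ L ^ 2)) ^ q := by
        apply Continuous.mul
        · fun_prop
        · exact (continuous_const.div (by fun_prop) (fun x => (hDpos x).ne')).rpow_const
            (fun x => Or.inr hq0.le)
      have hpt : ∀ x ∈ Set.Icc (0:ℝ) L,
          exp (x*((n:ℝ)-1)) * σ L ^ (n-2) * (2 / (exp x + exp (-x) + exp x * σ L ^ 2)) ^ q
            ≤ (2^q * σ L ^ ((n:ℝ)-2-2*q)) * exp (x*c) := by
        intro x _
        have hD : exp x * σ L^2 ≤ exp x + exp (-x) + exp x * σ L^2 := by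
          linarith [(Real.exp_pos x).le, (Real.exp_pos (-x)).le]
        have h2 : (2/(exp x + exp (-x) + exp x*σ L^2))^q ≤ (2/(exp x * σ L^2))^q :=
          Real.rpow_le_rpow (by positivity)
            (div_le_div_of_nonneg_left (by norm_num) (by positivity) hD) hq0.le
        calc exp (x*((n:ℝ)-1)) * σ L ^ (n-2) * (2/(exp x + exp (-x) + exp x*σ L^2))^q
            ≤ exp (x*((n:ℝ)-1)) * σ L ^ (n-2) * (2/(exp x * σ L^2))^q :=
              mul_le_mul_of_nonneg_left h2
                (mul_nonneg (Real.exp_pos _).le (pow_nonneg hs0.le _))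
          _ = (2^q * σ L ^ ((n:ℝ)-2-2*q)) * exp (x*c) := by
              rw [alg2 n hn q (σ L) x hs0]; ring
      rw [← intervalIntegral.integral_const_mul]
      exact intervalIntegral.integral_mono_on (by linarith)
        (hcontf.intervalIntegrable _ _)
        ((by fun_prop : Continuous fun x : ℝ =>
            (2^q * σ L ^ ((n:ℝ)-2-2*q)) * exp (x*c)).intervalIntegrable _ _) hpt
    have hnonneg : ∀ᶠ L : ℝ in atTop, 0 ≤
        ∫ x in (0:ℝ)..L, exp (x*((n:ℝ)-1)) * σ L ^ (n-2) *
            (2 / (exp x + exp (-x) + exp x * σ L ^ 2)) ^ q := by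
      filter_upwards [eventually_ge_atTop (1:ℝ)] with L hL
      have hs0 : (0:ℝ) ≤ σ L := by linarith [hσ1 L hL]
      refine intervalIntegral.integral_nonneg (by linarith) (fun u _ => ?_)
      exact mul_nonneg (mul_nonneg (Real.exp_pos _).le (pow_nonneg hs0 _))
        (Real.rpow_nonneg (by positivity) _)
    rcases lt_trichotomy q ((n:ℝ)-1) with hlt | heq | hgt
    · -- q < n - 1, c > 0
      have hc : 0 < c := by rw [hcdef]; linarith
      apply squeeze_zero' hnonneg
        (g := fun L : ℝ => (2^q/c) * (exp (L*c) * σ L ^ ((n:ℝ)-2-2*q)))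
      · filter_upwards [eventually_ge_atTop (1:ℝ)] with L hL
        have hs0 : (0:ℝ) ≤ σ L := by linarith [hσ1 L hL]
        refine le_trans (key L hL) ?_
        rw [expint c L hc.ne']
        have h1 : (exp (L*c) - 1)/c ≤ exp (L*c)/c := by
          gcongr
          linarith
        calc (2^q * σ L ^ ((n:ℝ)-2-2*q)) * ((exp (L*c) - 1)/c)
            ≤ (2^q * σ L ^ ((n:ℝ)-2-2*q)) * (exp (L*c)/c) := by
              apply mul_le_mul_of_nonneg_left h1
              exact mul_nonneg (by positivity) (Real.rpow_nonneg hs0 _)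
          _ = (2^q/c) * (exp (L*c) * σ L ^ ((n:ℝ)-2-2*q)) := by ring
      · simpa using (hcond1 hlt).const_mul ((2:ℝ)^q/c)
    · -- q = n - 1, c = 0
      have hc : c = 0 := by rw [hcdef, heq]; ring
      apply squeeze_zero' hnonneg
        (g := fun L : ℝ => (2^q) * (L * σ L ^ ((n:ℝ)-2-2*q)))
      · filter_upwards [eventually_ge_atTop (1:ℝ)] with L hL
        have hs0 : (0:ℝ) ≤ σ L := by linarith [hσ1 L hL]
        refine le_trans (key L hL) ?_
        have : (∫ x in (0:ℝ)..L, exp (x*c)) = L := by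
          rw [hc]; simp
        rw [this]
        apply le_of_eq; ring
      · simpa using (hcond2 heq).const_mul ((2:ℝ)^q)
    · -- q > n - 1, c < 0
      have hc : c < 0 := by rw [hcdef]; linarith
      apply squeeze_zero' hnonneg
        (g := fun L : ℝ => (2^q * (-(1/c))) * σ L ^ ((n:ℝ)-2-2*q))
      · filter_upwards [eventually_ge_atTop (1:ℝ)] with L hL
        have hs0 : (0:ℝ) ≤ σ L := by linarith [hσ1 L hL]
        refine le_trans (key L hL) ?_
        rw [expint c L hc.ne]
        have h1 : (exp (L*c) - 1)/c ≤ -(1/c) := by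
          have hci : c⁻¹ < 0 := inv_lt_zero.mpr hc
          have h2 : exp (L*c) * c⁻¹ ≤ 0 :=
            mul_nonpos_of_nonneg_of_nonpos (Real.exp_pos _).le hci.le
          rw [div_eq_mul_inv, one_div]
          nlinarith
        calc (2^q * σ L ^ ((n:ℝ)-2-2*q)) * ((exp (L*c) - 1)/c)
            ≤ (2^q * σ L ^ ((n:ℝ)-2-2*q)) * (-(1/c)) := by
              apply mul_le_mul_of_nonneg_left h1
              exact mul_nonneg (by positivity) (Real.rpow_nonneg hs0 _)
          _ = (2^q * (-(1/c))) * σ L ^ ((n:ℝ)-2-2*q) := by ring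
      · have h := hsig0.const_mul ((2:ℝ)^q * (-(1/c)))
        rw [mul_zero] at h
        exact h
end

section
/- Let n ≥ 3 be an integer. For L > 0 and ρ > 0 define t_L(ρ) = cosh L + e^L ρ²/2, r_L(ρ) = √(t_L(ρ)² − 1), and z_L(ρ) = t_L(ρ) − e^L. Then lim_{L→∞} ∫₀^∞ e^{L(n−1)} r_L(ρ)^{1−n} (1 − z_L(ρ)/r_L(ρ)) ρ^{n−2} dρ = √π · Γ((n−1)/2) / Γ(n/2). -/
set_option maxHeartbeats 1000000

open MeasureTheory Real Filter

theorem real_beta (a b : ℝ) (ha : 0 < a) (hb : 0 < b) :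
    ∫ x in (0:ℝ)..1, x ^ (a - 1) * (1 - x) ^ (b - 1) =
      Real.Gamma a * Real.Gamma b / Real.Gamma (a + b) := by
  have h := Complex.Gamma_mul_Gamma_eq_betaIntegral (s := (a:ℂ)) (t := (b:ℂ))
    (by simpa using ha) (by simpa using hb)
  rw [Complex.betaIntegral] at h
  have key : (∫ x in (0:ℝ)..1, (x:ℂ) ^ ((a:ℂ) - 1) * (1 - (x:ℂ)) ^ ((b:ℂ) - 1))
      = ((∫ x in (0:ℝ)..1, x ^ (a - 1) * (1 - x) ^ (b - 1) : ℝ) : ℂ) := by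
    rw [← intervalIntegral.integral_ofReal]
    refine intervalIntegral.integral_congr (fun x hx => ?_)
    rw [Set.uIcc_of_le (by norm_num : (0:ℝ) ≤ 1)] at hx
    obtain ⟨hx0, hx1⟩ := hx
    have e1 : ((x ^ (a-1) * (1-x) ^ (b-1) : ℝ) : ℂ)
        = ((x ^ (a-1) : ℝ) : ℂ) * (((1-x) ^ (b-1) : ℝ) : ℂ) := by push_cast; ring
    rw [e1, Complex.ofReal_cpow hx0, Complex.ofReal_cpow (by linarith : (0:ℝ) ≤ 1 - x)]
    push_cast
    ring
  rw [key, ← Complex.ofReal_add, Complex.Gamma_ofReal, Complex.Gamma_ofReal,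
    Complex.Gamma_ofReal, ← Complex.ofReal_mul, ← Complex.ofReal_mul] at h
  have := Complex.ofReal_inj.mp h
  have hG : Real.Gamma (a + b) ≠ 0 := (Real.Gamma_pos_of_pos (by linarith)).ne'
  field_simp [this]
  linear_combination -this

theorem integral_value (n : ℕ) (hn : 3 ≤ n) :
    ∫ ρ in Set.Ioi (0:ℝ), (2:ℝ)^n * ρ^(n-2) * ((1+ρ^2)^n)⁻¹ =
      Real.sqrt Real.pi * Real.Gamma (((n : ℝ) - 1) / 2) / Real.Gamma ((n : ℝ) / 2) := by
  obtain ⟨m, rfl⟩ : ∃ m, n = m + 3 := ⟨n - 3, by omega⟩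
  push_cast
  set a : ℝ := ((m:ℝ) + 3 - 1) / 2 with ha_def
  set b : ℝ := ((m:ℝ) + 3 + 1) / 2 with hb_def
  have hm0 : (0:ℝ) ≤ (m:ℝ) := Nat.cast_nonneg m
  have ha : 0 < a := by rw [ha_def]; linarith
  have hb : 0 < b := by rw [hb_def]; linarith
  set g : ℝ → ℝ := fun t => Real.sqrt t / Real.sqrt (1 - t) with hg_def
  set g' : ℝ → ℝ := fun t => (2 * Real.sqrt t * Real.sqrt (1 - t) * (1 - t))⁻¹ with hg'_def
  have himg : g '' (Set.Ioo 0 1) = Set.Ioi 0 := by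
    ext ρ
    simp only [Set.mem_image, Set.mem_Ioo, Set.mem_Ioi]
    constructor
    · rintro ⟨t, ⟨ht0, ht1⟩, rfl⟩
      exact div_pos (Real.sqrt_pos.mpr ht0) (Real.sqrt_pos.mpr (by linarith))
    · intro hρ
      refine ⟨ρ^2 / (1 + ρ^2), ⟨by positivity, by
        rw [div_lt_one (by positivity)]; linarith⟩, ?_⟩
      have h1 : (1:ℝ) - ρ^2/(1+ρ^2) = 1/(1+ρ^2) := by field_simp; ring
      rw [hg_def]
      simp only [h1]
      rw [Real.sqrt_div (by positivity : (0:ℝ) ≤ ρ^2), Real.sqrt_div (by norm_num : (0:ℝ) ≤ 1),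
        Real.sqrt_sq hρ.le, Real.sqrt_one]
      have hs : Real.sqrt (1 + ρ^2) ≠ 0 := by positivity
      field_simp
  have hderiv : ∀ t ∈ Set.Ioo (0:ℝ) 1, HasDerivWithinAt g (g' t) (Set.Ioo 0 1) t := by
    rintro t ⟨ht0, ht1⟩
    have h1t : (0:ℝ) < 1 - t := by linarith
    have hst : Real.sqrt t ≠ 0 := by positivity
    have hs1t : Real.sqrt (1-t) ≠ 0 := by positivity
    have hu : HasDerivAt Real.sqrt (1/(2*Real.sqrt t)) t := Real.hasDerivAt_sqrt ht0.ne'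
    have hv0 : HasDerivAt (fun t : ℝ => 1 - t) (-1) t := by
      simpa using (hasDerivAt_id t).const_sub 1
    have hv : HasDerivAt (fun t : ℝ => Real.sqrt (1-t)) (1/(2*Real.sqrt (1-t)) * (-1)) t :=
      (Real.hasDerivAt_sqrt h1t.ne').comp t hv0
    have hq := hu.div hv hs1t
    have heq : (1/(2*Real.sqrt t) * Real.sqrt (1-t) -
        Real.sqrt t * (1/(2*Real.sqrt (1-t)) * (-1))) / (Real.sqrt (1-t))^2 = g' t := by
      rw [Real.sq_sqrt h1t.le, hg'_def]
      have h2 : Real.sqrt t * Real.sqrt t = t := Real.mul_self_sqrt ht0.le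
      have h3 : Real.sqrt (1-t) * Real.sqrt (1-t) = 1 - t := Real.mul_self_sqrt h1t.le
      field_simp
      linear_combination h2 + h3
    exact (heq ▸ hq).hasDerivWithinAt
  have hinj : Set.InjOn g (Set.Ioo 0 1) := by
    rintro s ⟨hs0, hs1⟩ t ⟨ht0, ht1⟩ h
    have h1s : (0:ℝ) < 1 - s := by linarith
    have h1t : (0:ℝ) < 1 - t := by linarith
    have h2 : (g s)^2 = (g t)^2 := by rw [h]
    rw [hg_def] at h2
    simp only [div_pow, Real.sq_sqrt hs0.le, Real.sq_sqrt ht0.le,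
      Real.sq_sqrt h1s.le, Real.sq_sqrt h1t.le] at h2
    field_simp at h2
    linarith
  rw [← himg, integral_image_eq_integral_abs_deriv_smul measurableSet_Ioo hderiv hinj]
  have heq : Set.EqOn
      (fun t => |g' t| • ((2:ℝ)^(m+3) * (g t)^(m+1) * ((1+(g t)^2)^(m+3))⁻¹))
      (fun t => (2:ℝ)^(m+2) * (t ^ (a-1) * (1-t)^(b-1))) (Set.Ioo 0 1) := by
    rintro t ⟨ht0, ht1⟩
    have h1t : (0:ℝ) < 1 - t := by linarith
    have hst : (0:ℝ) < Real.sqrt t := Real.sqrt_pos.mpr ht0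
    have hs1t : (0:ℝ) < Real.sqrt (1-t) := Real.sqrt_pos.mpr h1t
    have habs : |g' t| = (2 * Real.sqrt t * Real.sqrt (1-t) * (1-t))⁻¹ := by
      rw [hg'_def, abs_of_pos]; positivity
    have hta : t ^ (a-1) = (Real.sqrt t)^(m) := by
      rw [← Real.rpow_natCast (Real.sqrt t) m, Real.sqrt_eq_rpow,
        ← Real.rpow_mul ht0.le, ha_def]
      norm_num
      ring_nf
    have htb : (1-t) ^ (b-1) = (Real.sqrt (1-t))^(m+2) := by
      rw [← Real.rpow_natCast (Real.sqrt (1-t)) (m+2), Real.sqrt_eq_rpow,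
        ← Real.rpow_mul h1t.le, hb_def]
      push_cast
      ring_nf
    set st := Real.sqrt t with hst_def
    set s1 := Real.sqrt (1-t) with hs1_def
    have h2 : st^2 = t := Real.sq_sqrt ht0.le
    have h3 : (1:ℝ) - t = s1^2 := (Real.sq_sqrt h1t.le).symm
    have hone : 1 + (st/s1)^2 = (s1^2)⁻¹ := by
      rw [div_pow, h2, ← h3]
      field_simp
      ring
    simp only [smul_eq_mul, habs, hta, htb, hg_def, ← hst_def, ← hs1_def, hone]
    rw [inv_pow, inv_inv, h3]
    field_simp
    rw [div_pow]
    field_simp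
    ring
  rw [setIntegral_congr_fun measurableSet_Ioo heq,
    ← integral_Ioc_eq_integral_Ioo, ← intervalIntegral.integral_of_le zero_le_one,
    intervalIntegral.integral_const_mul, real_beta a b ha hb]
  have hab : a + b = ((m:ℝ) + 3) := by rw [ha_def, hb_def]; ring
  have hdup := Real.Gamma_mul_Gamma_add_half (((m:ℝ)+3)/2)
  have hb2 : ((m:ℝ)+3)/2 + 1/2 = b := by rw [hb_def]; ring
  have h2n : 2 * (((m:ℝ)+3)/2) = ((m:ℝ)+3) := by ring
  rw [hb2, h2n] at hdup
  have hpow : (2:ℝ) ^ ((1:ℝ) - ((m:ℝ)+3)) = ((2:ℝ)^(m+2))⁻¹ := by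
    rw [show (1:ℝ) - ((m:ℝ)+3) = -(((m+2:ℕ):ℝ)) by push_cast; ring,
      Real.rpow_neg (by norm_num : (0:ℝ) ≤ 2), Real.rpow_natCast]
  rw [hpow] at hdup
  have hG2 : Real.Gamma (((m:ℝ)+3)/2) ≠ 0 := (Real.Gamma_pos_of_pos (by positivity)).ne'
  have hGn : Real.Gamma ((m:ℝ)+3) ≠ 0 := (Real.Gamma_pos_of_pos (by positivity)).ne'
  have h2m : ((2:ℝ)^(m+2)) ≠ 0 := by positivity
  have hdup2 : Real.Gamma (((m:ℝ)+3)/2) * Real.Gamma b * 2^(m+2)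
      = Real.Gamma ((m:ℝ)+3) * Real.sqrt Real.pi := by
    field_simp at hdup
    linarith
  rw [hab]
  field_simp
  linear_combination hdup2


/-- AdS Schwarzschild horosphere limit: with `t_L(ρ) = cosh L + e^L ρ²/2`,
`r_L(ρ) = √(t_L(ρ)² − 1)` and `z_L(ρ) = t_L(ρ) − e^L`,
`∫₀^∞ e^{L(n−1)} r_L^{1−n} (1 − z_L/r_L) ρ^{n−2} dρ → √π Γ((n−1)/2)/Γ(n/2)` as `L → ∞`. -/
theorem stmt_14 (n : ℕ) (hn : 3 ≤ n) :
    Tendsto (fun L : ℝ =>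
      ∫ ρ in Set.Ioi (0:ℝ),
        Real.exp (L * ((n : ℝ) - 1)) *
          Real.sqrt ((Real.cosh L + Real.exp L * ρ ^ 2 / 2) ^ 2 - 1) ^ (1 - (n : ℝ)) *
          (1 - (Real.cosh L + Real.exp L * ρ ^ 2 / 2 - Real.exp L) /
              Real.sqrt ((Real.cosh L + Real.exp L * ρ ^ 2 / 2) ^ 2 - 1)) *
          ρ ^ (n - 2))
      atTop
      (nhds (Real.sqrt Real.pi * Real.Gamma (((n : ℝ) - 1) / 2) / Real.Gamma ((n : ℝ) / 2))) := by
  have hn3 : (3:ℝ) ≤ (n:ℝ) := by exact_mod_cast hn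
  rw [← integral_value n hn]
  set bound : ℝ → ℝ := fun ρ => 2 * ((4/(1+ρ^2)) ^ ((n:ℝ)-1)) * ρ^(n-2) with hbound_def
  -- basic positivity facts
  have hSpos : ∀ (L ρ : ℝ), 0 < ρ →
      0 < (Real.cosh L + Real.exp L * ρ ^ 2 / 2) ^ 2 - 1 := by
    intro L ρ hρ
    have h1 : 1 ≤ Real.cosh L := Real.one_le_cosh L
    have h2 : 0 < Real.exp L * ρ^2 / 2 := by positivity
    nlinarith
  refine tendsto_integral_filter_of_dominated_convergence bound ?_ ?_ ?_ ?_
  · -- measurability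
    refine Eventually.of_forall (fun L => ?_)
    have hS : Continuous (fun ρ : ℝ => Real.sqrt ((Real.cosh L + Real.exp L * ρ ^ 2 / 2) ^ 2 - 1)) := by
      fun_prop
    have hSne : ∀ ρ ∈ Set.Ioi (0:ℝ),
        Real.sqrt ((Real.cosh L + Real.exp L * ρ ^ 2 / 2) ^ 2 - 1) ≠ 0 := fun ρ hρ =>
      (Real.sqrt_pos.mpr (hSpos L ρ hρ)).ne'
    refine ContinuousOn.aestronglyMeasurable ?_ measurableSet_Ioi
    refine ContinuousOn.mul (ContinuousOn.mul (ContinuousOn.mul continuousOn_const ?_) ?_)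
      (continuous_pow _).continuousOn
    · exact ContinuousOn.rpow_const hS.continuousOn (fun ρ hρ => Or.inl (hSne ρ hρ))
    · exact ContinuousOn.sub continuousOn_const
        (ContinuousOn.div (by fun_prop) hS.continuousOn hSne)
  · -- domination
    filter_upwards [eventually_ge_atTop (2:ℝ)] with L hL
    rw [ae_restrict_iff' measurableSet_Ioi]
    refine Eventually.of_forall (fun ρ hρ => ?_)
    have hρ : (0:ℝ) < ρ := hρ
    have hE3 : (3:ℝ) ≤ Real.exp L := by
      have := Real.add_one_le_exp (2:ℝ)
      have h2 := Real.exp_le_exp.mpr hL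
      linarith
    have hEpos := Real.exp_pos L
    have hEneg := Real.exp_pos (-L)
    set t := Real.cosh L + Real.exp L * ρ ^ 2 / 2 with ht_def
    have hee : Real.exp L * Real.exp (-L) = 1 := by
      rw [← Real.exp_add]; simp
    have ht2 : 0 < t^2 - 1 := hSpos L ρ hρ
    set r := Real.sqrt (t^2 - 1) with hr_def
    have hrpos : 0 < r := Real.sqrt_pos.mpr ht2
    have hrsq : r^2 = t^2 - 1 := Real.sq_sqrt ht2.le
    have hz2 : t^2 - 1 - (t - Real.exp L)^2 = (Real.exp L * ρ)^2 := by
      rw [ht_def, Real.cosh_eq]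
      linear_combination hee
    have hzr : t - Real.exp L < r := by nlinarith [sq_nonneg (r + (t - Real.exp L))]
    have hzl : -r < t - Real.exp L := by
      by_contra h
      push_neg at h
      nlinarith [mul_self_le_mul_self hrpos.le (by linarith : r ≤ -(t - Real.exp L)),
        mul_pos (mul_pos hEpos hρ) (mul_pos hEpos hρ)]
    have hfrac0 : 0 ≤ 1 - (t - Real.exp L)/r := by
      rw [sub_nonneg]
      exact (div_le_one hrpos).mpr hzr.le
    have hfrac2 : 1 - (t - Real.exp L)/r ≤ 2 := by
      have : -1 ≤ (t - Real.exp L)/r := by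
        rw [le_div_iff₀ hrpos]; linarith
      linarith
    have htM : Real.exp L * (1+ρ^2)/2 ≤ t := by
      rw [ht_def, Real.cosh_eq]
      nlinarith
    have hM32 : (3:ℝ)/2 ≤ Real.exp L * (1+ρ^2)/2 := by nlinarith
    have hMr : Real.exp L * (1+ρ^2)/4 ≤ r := by
      rw [hr_def]
      rw [Real.le_sqrt (by positivity) ht2.le]
      nlinarith [mul_self_le_mul_self (by positivity : (0:ℝ) ≤ Real.exp L*(1+ρ^2)/2) htM,
        mul_self_le_mul_self (by norm_num : (0:ℝ) ≤ 3/2) hM32]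
    -- now the estimate
    have hB : r ^ (1-(n:ℝ)) ≤ (Real.exp L * (1+ρ^2)/4) ^ (1-(n:ℝ)) :=
      Real.rpow_le_rpow_of_nonpos (by positivity) hMr (by linarith)
    have hsplit : (Real.exp L * (1+ρ^2)/4) ^ (1-(n:ℝ))
        = Real.exp (L*(1-(n:ℝ))) * ((4/(1+ρ^2)) ^ ((n:ℝ)-1)) := by
      rw [show Real.exp L * (1+ρ^2)/4 = Real.exp L * ((1+ρ^2)/4) by ring,
        Real.mul_rpow hEpos.le (by positivity),
        Real.rpow_def_of_pos hEpos, Real.log_exp,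
        show (1:ℝ)-(n:ℝ) = -((n:ℝ)-1) by ring,
        Real.rpow_neg (by positivity : (0:ℝ) ≤ (1+ρ^2)/4),
        ← Real.inv_rpow (by positivity : (0:ℝ) ≤ (1+ρ^2)/4), inv_div]
    have hAB : Real.exp (L*((n:ℝ)-1)) * r ^ (1-(n:ℝ)) ≤ (4/(1+ρ^2)) ^ ((n:ℝ)-1) := by
      calc Real.exp (L*((n:ℝ)-1)) * r ^ (1-(n:ℝ))
          ≤ Real.exp (L*((n:ℝ)-1)) * (Real.exp L * (1+ρ^2)/4) ^ (1-(n:ℝ)) := by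
            exact mul_le_mul_of_nonneg_left hB (Real.exp_pos _).le
        _ = (4/(1+ρ^2)) ^ ((n:ℝ)-1) := by
            rw [hsplit, ← mul_assoc, ← Real.exp_add]
            ring_nf
            rw [Real.exp_zero, one_mul]
    have hABnn : 0 ≤ (4/(1+ρ^2)) ^ ((n:ℝ)-1) := by positivity
    have habs : ‖Real.exp (L*((n:ℝ)-1)) * r ^ (1-(n:ℝ)) * (1 - (t - Real.exp L)/r) * ρ^(n-2)‖
        = Real.exp (L*((n:ℝ)-1)) * r ^ (1-(n:ℝ)) * (1 - (t - Real.exp L)/r) * ρ^(n-2) := by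
      rw [Real.norm_eq_abs, abs_of_nonneg]
      have h1 : (0:ℝ) ≤ Real.exp (L*((n:ℝ)-1)) * r ^ (1-(n:ℝ)) := by positivity
      exact mul_nonneg (mul_nonneg h1 hfrac0) (by positivity)
    rw [habs]
    calc Real.exp (L*((n:ℝ)-1)) * r ^ (1-(n:ℝ)) * (1 - (t - Real.exp L)/r) * ρ^(n-2)
        ≤ ((4/(1+ρ^2)) ^ ((n:ℝ)-1) * 2) * ρ^(n-2) := by
          refine mul_le_mul_of_nonneg_right ?_ (by positivity)
          exact mul_le_mul hAB hfrac2 hfrac0 hABnn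
      _ = bound ρ := by rw [hbound_def]; ring
  · -- integrability of bound
    have hcb : Continuous bound := by
      rw [hbound_def]
      refine ((continuous_const.mul ?_).mul (continuous_pow _))
      refine Continuous.rpow_const ?_ (fun x => Or.inl (by positivity))
      exact continuous_const.div (by fun_prop) (fun x => by positivity)
    have h1 : IntegrableOn bound (Set.Ioc 0 1) := hcb.integrableOn_Ioc
    have h2 : IntegrableOn bound (Set.Ioi 1) := by
      have hint2 : IntegrableOn (fun ρ : ℝ => (2*4^((n:ℝ)-1)) * ρ^(-2:ℝ)) (Set.Ioi 1) :=
        (integrableOn_Ioi_rpow_of_lt (by norm_num) one_pos).const_mul _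
      refine Integrable.mono hint2 (hcb.aestronglyMeasurable.restrict) ?_
      rw [ae_restrict_iff' measurableSet_Ioi]
      refine Eventually.of_forall (fun ρ hρ => ?_)
      have hρ1 : (1:ℝ) ≤ ρ := le_of_lt hρ
      have hρ0 : (0:ℝ) < ρ := by linarith
      have hb0 : 0 ≤ bound ρ := by rw [hbound_def]; positivity
      have step1 : (4/(1+ρ^2)) ^ ((n:ℝ)-1) ≤ (4/ρ^2) ^ ((n:ℝ)-1) := by
        refine Real.rpow_le_rpow (by positivity) ?_ (by linarith)
        refine div_le_div_of_nonneg_left (by norm_num) (by positivity) (by linarith)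
      have e1 : (ρ:ℝ)^(n-2) = ρ ^ ((n:ℝ)-2) := by
        rw [← Real.rpow_natCast ρ (n-2), Nat.cast_sub (by omega : 2 ≤ n)]
        norm_num
      have step2 : (4/ρ^2) ^ ((n:ℝ)-1) * ρ^(n-2) = 4^((n:ℝ)-1) * ρ^(-(n:ℝ)) := by
        rw [Real.div_rpow (by norm_num) (by positivity), e1,
          show (ρ:ℝ)^(2:ℕ) = ρ ^ (2:ℝ) by rw [← Real.rpow_natCast ρ 2]; norm_num,
          ← Real.rpow_mul hρ0.le, div_mul_eq_mul_div, div_eq_mul_inv,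
          ← Real.rpow_neg hρ0.le, mul_assoc, ← Real.rpow_add hρ0]
        congr 1
        ring
      rw [Real.norm_eq_abs, abs_of_nonneg hb0, Real.norm_eq_abs, abs_of_nonneg (by positivity)]
      calc bound ρ = 2 * ((4/(1+ρ^2))^((n:ℝ)-1) * ρ^(n-2)) := by rw [hbound_def]; ring
        _ ≤ 2 * ((4/ρ^2)^((n:ℝ)-1) * ρ^(n-2)) := by
              refine mul_le_mul_of_nonneg_left
                (mul_le_mul_of_nonneg_right step1 (by positivity)) (by norm_num)
        _ = 2*4^((n:ℝ)-1) * ρ^(-(n:ℝ)) := by rw [step2]; ring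
        _ ≤ 2*4^((n:ℝ)-1) * ρ^(-2:ℝ) := by
              refine mul_le_mul_of_nonneg_left
                (Real.rpow_le_rpow_of_exponent_le hρ1 (by linarith)) (by positivity)
    have := h1.union h2
    rwa [Set.Ioc_union_Ioi_eq_Ioi zero_le_one] at this
  · -- pointwise limit
    rw [ae_restrict_iff' measurableSet_Ioi]
    refine Eventually.of_forall (fun ρ hρ => ?_)
    have hρ : (0:ℝ) < ρ := hρ
    have hu0 : (0:ℝ) < (1+ρ^2)/2 := by positivity
    have hident : ∀ L : ℝ, Real.exp (L*((n:ℝ)-1)) *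
        Real.sqrt ((Real.cosh L + Real.exp L * ρ^2/2)^2 - 1) ^ (1-(n:ℝ)) *
        (1 - (Real.cosh L + Real.exp L * ρ^2/2 - Real.exp L) /
          Real.sqrt ((Real.cosh L + Real.exp L * ρ^2/2)^2 - 1)) * ρ^(n-2)
        = (Real.sqrt (((1+ρ^2+Real.exp (-(2*L)))/2)^2 - Real.exp (-(2*L)))) ^ (1-(n:ℝ)) *
          (1 - ((1+ρ^2+Real.exp (-(2*L)))/2 - 1) /
            Real.sqrt (((1+ρ^2+Real.exp (-(2*L)))/2)^2 - Real.exp (-(2*L)))) * ρ^(n-2) := by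
      intro L
      have hEpos := Real.exp_pos L
      have hEe : Real.exp L * Real.exp (-(2*L)) = Real.exp (-L) := by
        rw [← Real.exp_add]; congr 1; ring
      have hE2e : (Real.exp L)^2 * Real.exp (-(2*L)) = 1 := by
        rw [sq, mul_assoc, hEe, ← Real.exp_add]; simp
      have ht : Real.cosh L + Real.exp L * ρ^2/2
          = Real.exp L * ((1+ρ^2+Real.exp (-(2*L)))/2) := by
        rw [Real.cosh_eq]
        linear_combination -hEe/2
      have hsq : (Real.cosh L + Real.exp L*ρ^2/2)^2 - 1
          = (Real.exp L)^2 * ((((1+ρ^2+Real.exp (-(2*L)))/2))^2 - Real.exp (-(2*L))) := by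
        rw [ht]
        linear_combination hE2e
      have hsqrt : Real.sqrt ((Real.cosh L + Real.exp L*ρ^2/2)^2 - 1)
          = Real.exp L * Real.sqrt ((((1+ρ^2+Real.exp (-(2*L)))/2))^2 - Real.exp (-(2*L))) := by
        rw [hsq, show (Real.exp L)^2 = Real.exp L * Real.exp L from sq (Real.exp L) ▸ rfl]
        rw [← sq, Real.sqrt_mul (by positivity), Real.sqrt_sq hEpos.le]
      set W := Real.sqrt ((((1+ρ^2+Real.exp (-(2*L)))/2))^2 - Real.exp (-(2*L))) with hW_def
      have hWnn : 0 ≤ W := Real.sqrt_nonneg _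
      rw [hsqrt, ht, Real.mul_rpow hEpos.le hWnn, Real.rpow_def_of_pos hEpos, Real.log_exp]
      have hee : Real.exp (L*((n:ℝ)-1)) * Real.exp (L*(1-(n:ℝ))) = 1 := by
        rw [← Real.exp_add]
        rw [show L*((n:ℝ)-1) + L*(1-(n:ℝ)) = 0 by ring, Real.exp_zero]
      have hdiv : (Real.exp L * ((1+ρ^2+Real.exp (-(2*L)))/2) - Real.exp L)/(Real.exp L * W)
          = ((1+ρ^2+Real.exp (-(2*L)))/2 - 1)/W := by
        rw [show Real.exp L * ((1+ρ^2+Real.exp (-(2*L)))/2) - Real.exp L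
            = Real.exp L * (((1+ρ^2+Real.exp (-(2*L)))/2) - 1) by ring,
          mul_div_mul_left _ _ hEpos.ne']
      rw [hdiv]
      linear_combination (W ^ (1-(n:ℝ)) *
        (1 - ((1+ρ^2+Real.exp (-(2*L)))/2 - 1)/W) * ρ^(n-2)) * hee
    have hcomp : Tendsto (fun L : ℝ => Real.exp (-(2*L))) atTop (nhds 0) := by
      refine Real.tendsto_exp_atBot.comp ?_
      exact tendsto_neg_atTop_atBot.comp (tendsto_id.const_mul_atTop two_pos)
    have hwcont : Continuous (fun ε : ℝ => ((1+ρ^2+ε)/2)^2 - ε) := by fun_prop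
    have hscont : Continuous (fun ε : ℝ => Real.sqrt (((1+ρ^2+ε)/2)^2 - ε)) :=
      Real.continuous_sqrt.comp hwcont
    have hs0 : Real.sqrt (((1+ρ^2+(0:ℝ))/2)^2 - 0) = (1+ρ^2)/2 := by
      rw [show ((1+ρ^2+(0:ℝ))/2)^2 - 0 = ((1+ρ^2)/2)^2 by ring, Real.sqrt_sq hu0.le]
    have hne : Real.sqrt (((1+ρ^2+(0:ℝ))/2)^2 - 0) ≠ 0 := by rw [hs0]; positivity
    have h1 : ContinuousAt
        (fun ε : ℝ => (Real.sqrt (((1+ρ^2+ε)/2)^2 - ε)) ^ (1-(n:ℝ))) 0 :=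
      ContinuousAt.rpow_const hscont.continuousAt (Or.inl hne)
    have h2 : ContinuousAt
        (fun ε : ℝ => 1 - ((1+ρ^2+ε)/2 - 1)/Real.sqrt (((1+ρ^2+ε)/2)^2 - ε)) 0 :=
      continuousAt_const.sub (ContinuousAt.div (by fun_prop) hscont.continuousAt hne)
    have hΦcont : ContinuousAt (fun ε : ℝ =>
        (Real.sqrt (((1+ρ^2+ε)/2)^2 - ε)) ^ (1-(n:ℝ)) *
        (1 - ((1+ρ^2+ε)/2 - 1)/Real.sqrt (((1+ρ^2+ε)/2)^2 - ε)) * ρ^(n-2)) 0 :=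
      (h1.mul h2).mul continuousAt_const
    have hT := hΦcont.tendsto.comp hcomp
    have hΦ0 : (Real.sqrt (((1+ρ^2+(0:ℝ))/2)^2 - 0)) ^ (1-(n:ℝ)) *
        (1 - ((1+ρ^2+(0:ℝ))/2 - 1)/Real.sqrt (((1+ρ^2+(0:ℝ))/2)^2 - 0)) * ρ^(n-2)
        = (2:ℝ)^n * ρ^(n-2) * ((1+ρ^2)^n)⁻¹ := by
      rw [hs0]
      have hX : 1 - ((1+ρ^2+(0:ℝ))/2 - 1)/((1+ρ^2)/2) = ((1+ρ^2)/2)⁻¹ := by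
        field_simp
        ring
      rw [hX]
      have hr1 : ((1+ρ^2)/2) ^ (1-(n:ℝ)) * ((1+ρ^2)/2)⁻¹ = ((1+ρ^2)/2) ^ (-(n:ℝ)) := by
        rw [← Real.rpow_neg_one ((1+ρ^2)/2), ← Real.rpow_add hu0]
        congr 1
        ring
      have hr2 : ((1+ρ^2)/2) ^ (-(n:ℝ)) = (2:ℝ)^n * ((1+ρ^2)^n)⁻¹ := by
        rw [Real.rpow_neg hu0.le, Real.rpow_natCast, div_pow, inv_div, div_eq_mul_inv]
      rw [hr1, hr2]
      ring
    have hT2 : Tendsto (fun L : ℝ =>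
        (Real.sqrt (((1+ρ^2+Real.exp (-(2*L)))/2)^2 - Real.exp (-(2*L)))) ^ (1-(n:ℝ)) *
          (1 - ((1+ρ^2+Real.exp (-(2*L)))/2 - 1) /
            Real.sqrt (((1+ρ^2+Real.exp (-(2*L)))/2)^2 - Real.exp (-(2*L)))) * ρ^(n-2))
        atTop (nhds ((2:ℝ)^n * ρ^(n-2) * ((1+ρ^2)^n)⁻¹)) := by
      rw [← hΦ0]
      exact hT
    exact Tendsto.congr (fun L => (hident L).symm) hT2
end
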